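/- Every Horton set with at least 26 points, colored arbitrarily with 4 colors, contains a monochromatic triangle with at most 1 point of the set in its interior. -/

import Mathlib

open scoped Classical

noncomputable section

/-- A planar point set is in general position if no three distinct points are collinear. -/
def GenPos (S : Set (ℝ × ℝ)) : Prop :=
  ∀ p ∈ S, ∀ q ∈ S, ∀ r ∈ S, p ≠ q → p ≠ r → q ≠ r →
    ¬ Collinear ℝ ({p, q, r} : Set (ℝ × ℝ))

/-- Number of points of `S` strictly inside the triangle `a b c`. -/
def triPts (S : Finset (ℝ × ℝ)) (a b c : ℝ × ℝ) : ℕ :=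
  (S.filter (fun p => p ∈ interior (convexHull ℝ ({a, b, c} : Set (ℝ × ℝ))))).card

/-- `S` (colored by `χ`) contains a monochromatic triangle with at most `s` interior points. -/
def MonoTriangle {c : ℕ} (S : Finset (ℝ × ℝ)) (χ : ℝ × ℝ → Fin c) (s : ℕ) : Prop :=
  ∃ a ∈ S, ∃ b ∈ S, ∃ d ∈ S, a ≠ b ∧ a ≠ d ∧ b ≠ d ∧
    χ a = χ b ∧ χ b = χ d ∧ triPts S a b d ≤ s
/-- The elements at even positions (0-based: positions 0,2,4,…) of a list. -/
def everyOther : List (ℝ × ℝ) → List (ℝ × ℝ)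
  | [] => []
  | [a] => [a]
  | a :: _ :: l => a :: everyOther l

/-- A list of points sorted by strictly increasing x-coordinate. -/
def SortedX (l : List (ℝ × ℝ)) : Prop := l.Pairwise (fun p q => p.1 < q.1)

/-- `p` lies strictly above the (non-vertical) line through `a` and `b`. -/
def AboveLine (a b p : ℝ × ℝ) : Prop :=
  a.2 + (b.2 - a.2) / (b.1 - a.1) * (p.1 - a.1) < p.2

/-- `p` lies strictly below the (non-vertical) line through `a` and `b`. -/
def BelowLine (a b p : ℝ × ℝ) : Prop :=
  p.2 < a.2 + (b.2 - a.2) / (b.1 - a.1) * (p.1 - a.1)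

/-- Horton sets, as lists sorted by x-coordinate. For a list `l`, the odd points
`H⁻` are `everyOther l` (1-indexed positions 1,3,5,…) and the even points `H⁺` are
`everyOther l.tail` (positions 2,4,6,…). Both parts are recursively Horton, every
line through two points of `H⁺` leaves all of `H⁻` strictly below it, and every
line through two points of `H⁻` leaves all of `H⁺` strictly above it. -/
inductive IsHorton : List (ℝ × ℝ) → Prop where
  | small : ∀ l : List (ℝ × ℝ), l.length ≤ 2 → SortedX l → IsHorton l
  | step : ∀ l : List (ℝ × ℝ), SortedX l → 3 ≤ l.length →
      IsHorton (everyOther l) → IsHorton (everyOther l.tail) →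
      (∀ a ∈ everyOther l.tail, ∀ b ∈ everyOther l.tail, a ≠ b →
        ∀ p ∈ everyOther l, BelowLine a b p) →
      (∀ a ∈ everyOther l, ∀ b ∈ everyOther l, a ≠ b →
        ∀ p ∈ everyOther l.tail, AboveLine a b p) →
      IsHorton l


namespace HortonProof

theorem everyOther_length : ∀ l : List (ℝ×ℝ), (everyOther l).length = (l.length + 1) / 2
  | [] => rfl
  | [_] => by simp [everyOther]
  | _ :: _ :: t => by
      simp only [everyOther, List.length_cons, everyOther_length t]
      omega

theorem everyOther_get? : ∀ (l : List (ℝ×ℝ)) (j : ℕ), (everyOther l)[j]? = l[2*j]?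
  | [], j => by simp [everyOther]
  | [a], j => by
      have e : 2*(j+1) = 2*j+1+1 := by ring
      cases j with
      | zero => rfl
      | succ j =>
          simp only [everyOther]
          rw [List.getElem?_eq_none (by simp), List.getElem?_eq_none (by simp; omega)]
  | a :: b :: t, j => by
      cases j with
      | zero => simp [everyOther]
      | succ j =>
          have e : 2*(j+1) = 2*j+1+1 := by ring
          simp only [everyOther, e, List.getElem?_cons_succ]
          exact everyOther_get? t j

theorem everyOther_get (l : List (ℝ×ℝ)) (j : ℕ) (h2 : 2*j < l.length) :
    (everyOther l)[j]'(by rw [everyOther_length]; omega) = l[2*j] := by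
  have h' : j < (everyOther l).length := by rw [everyOther_length]; omega
  have := everyOther_get? l j
  rw [List.getElem?_eq_getElem h', List.getElem?_eq_getElem h2] at this
  exact Option.some_injective _ this

theorem everyOther_sublist : ∀ l : List (ℝ×ℝ), List.Sublist (everyOther l) l
  | [] => List.Sublist.refl _
  | [a] => List.Sublist.refl _
  | a :: b :: t => by
      show List.Sublist (a :: everyOther t) (a :: b :: t)
      exact ((everyOther_sublist t).cons b).cons₂ a

theorem eoTail_length (l : List (ℝ×ℝ)) : (everyOther l.tail).length = l.length / 2 := by
  rw [everyOther_length, List.length_tail]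
  omega

theorem eoTail_get (l : List (ℝ×ℝ)) (j : ℕ) (h2 : 2*j+1 < l.length) :
    (everyOther l.tail)[j]'(by rw [eoTail_length]; omega) = l[2*j+1] := by
  have ht : 2*j < l.tail.length := by rw [List.length_tail]; omega
  rw [everyOther_get l.tail j ht, List.getElem_tail]

theorem hortonSortedX {l : List (ℝ×ℝ)} (h : IsHorton l) : SortedX l := by
  cases h with
  | small _ _ hs => exact hs
  | step _ hs _ _ _ _ _ => exact hs

theorem hortonLeft {l : List (ℝ×ℝ)} (h : IsHorton l) : IsHorton (everyOther l) := by
  cases h with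
  | small l hl hs =>
      refine IsHorton.small _ ?_ ?_
      · rw [everyOther_length]; omega
      · exact hs.sublist (everyOther_sublist l)
  | step l _ _ h1 _ _ _ => exact h1

theorem hortonRight {l : List (ℝ×ℝ)} (h : IsHorton l) : IsHorton (everyOther l.tail) := by
  cases h with
  | small l hl hs =>
      refine IsHorton.small _ ?_ ?_
      · rw [eoTail_length]; omega
      · exact hs.sublist (List.Sublist.trans (everyOther_sublist l.tail) (List.tail_sublist l))
  | step l _ _ _ h2 _ _ => exact h2

theorem sorted_fst_lt {l : List (ℝ×ℝ)} (h : SortedX l) {i j : ℕ}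
    (hj : j < l.length) (hij : i < j) : l[i].1 < l[j].1 := by
  exact List.pairwise_iff_getElem.1 h i j (hij.trans hj) hj hij

theorem sorted_ne {l : List (ℝ×ℝ)} (h : SortedX l) {i j : ℕ}
    (hi : i < l.length) (hj : j < l.length) (hij : i ≠ j) : l[i] ≠ l[j] := by
  rcases Nat.lt_or_ge i j with hl | hl
  · intro he; exact absurd (congrArg Prod.fst he) (ne_of_lt (sorted_fst_lt h hj hl))
  · have : j < i := by omega
    intro he; exact absurd (congrArg Prod.fst he) (ne_of_gt (sorted_fst_lt h hi this))

theorem side_lemma : ∀ (k : ℕ) (l : List (ℝ×ℝ)), IsHorton l →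
    ∀ x p1 p2 (hx : x < l.length) (h1 : p1 < l.length) (h2 : p2 < l.length),
    x % 2^k = p1 % 2^k → x % 2^k = p2 % 2^k →
    p1 / 2^k % 2 = p2 / 2^k % 2 → x / 2^k % 2 ≠ p1 / 2^k % 2 → p1 ≠ p2 →
    (x / 2^k % 2 = 1 → AboveLine l[p1] l[p2] l[x]) ∧
    (x / 2^k % 2 = 0 → BelowLine l[p1] l[p2] l[x]) := by
  intro k
  induction k with
  | zero =>
      intro l hH x p1 p2 hx h1 h2 _ _ hp12 hxp hne
      simp only [pow_zero, Nat.div_one] at hp12 hxp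
      have hlen3 : 3 ≤ l.length := by omega
      cases hH with
      | small _ hl _ => omega
      | step l hs _ hL hR hBelow hAbove =>
          constructor
          · intro hx1
            -- x odd, p1 p2 even
            have hp1e : p1 % 2 = 0 := by omega
            have hp2e : p2 % 2 = 0 := by omega
            have e1 : (everyOther l)[p1/2]'(by rw [everyOther_length]; omega) = l[p1] := by
              rw [everyOther_get l (p1/2) (by omega)]; congr 1; omega
            have e2 : (everyOther l)[p2/2]'(by rw [everyOther_length]; omega) = l[p2] := by
              rw [everyOther_get l (p2/2) (by omega)]; congr 1; omega
            have e3 : (everyOther l.tail)[x/2]'(by rw [eoTail_length]; omega) = l[x] := by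
              rw [eoTail_get l (x/2) (by omega)]; congr 1; omega
            have m1 : l[p1] ∈ everyOther l := e1 ▸ List.getElem_mem _
            have m2 : l[p2] ∈ everyOther l := e2 ▸ List.getElem_mem _
            have m3 : l[x] ∈ everyOther l.tail := e3 ▸ List.getElem_mem _
            exact hAbove _ m1 _ m2 (sorted_ne hs h1 h2 hne) _ m3
          · intro hx0
            have hp1o : p1 % 2 = 1 := by omega
            have hp2o : p2 % 2 = 1 := by omega
            have e1 : (everyOther l.tail)[p1/2]'(by rw [eoTail_length]; omega) = l[p1] := by
              rw [eoTail_get l (p1/2) (by omega)]; congr 1; omega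
            have e2 : (everyOther l.tail)[p2/2]'(by rw [eoTail_length]; omega) = l[p2] := by
              rw [eoTail_get l (p2/2) (by omega)]; congr 1; omega
            have e3 : (everyOther l)[x/2]'(by rw [everyOther_length]; omega) = l[x] := by
              rw [everyOther_get l (x/2) (by omega)]; congr 1; omega
            have m1 : l[p1] ∈ everyOther l.tail := e1 ▸ List.getElem_mem _
            have m2 : l[p2] ∈ everyOther l.tail := e2 ▸ List.getElem_mem _
            have m3 : l[x] ∈ everyOther l := e3 ▸ List.getElem_mem _
            exact hBelow _ m1 _ m2 (sorted_ne hs h1 h2 hne) _ m3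
  | succ k ih =>
      intro l hH x p1 p2 hx h1 h2 ha1 ha2 hp12 hxp hne
      -- all three share parity
      have hpar1 : x % 2 = p1 % 2 := by
        have d : (2:ℕ) ∣ 2^(k+1) := dvd_pow_self 2 (Nat.succ_ne_zero k)
        calc x % 2 = x % 2^(k+1) % 2 := (Nat.mod_mod_of_dvd x d).symm
        _ = p1 % 2^(k+1) % 2 := by rw [ha1]
        _ = p1 % 2 := Nat.mod_mod_of_dvd p1 d
      have hpar2 : x % 2 = p2 % 2 := by
        have d : (2:ℕ) ∣ 2^(k+1) := dvd_pow_self 2 (Nat.succ_ne_zero k)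
        calc x % 2 = x % 2^(k+1) % 2 := (Nat.mod_mod_of_dvd x d).symm
        _ = p2 % 2^(k+1) % 2 := by rw [ha2]
        _ = p2 % 2 := Nat.mod_mod_of_dvd p2 d
      -- halved agreements
      have key : ∀ a b : ℕ, a % 2^(k+1) = b % 2^(k+1) → a / 2 % 2^k = b / 2 % 2^k := by
        intro a b hab
        have ha' : a % (2 * 2^k) / 2 = a / 2 % 2^k := Nat.mod_mul_right_div_self a 2 (2^k)
        have hb' : b % (2 * 2^k) / 2 = b / 2 % 2^k := Nat.mod_mul_right_div_self b 2 (2^k)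
        rw [← ha', ← hb']
        rw [show (2 * 2^k) = 2^(k+1) by rw [pow_succ]; ring]
        rw [hab]
      have hdiv : ∀ a : ℕ, a / 2^(k+1) = a / 2 / 2^k := by
        intro a
        rw [Nat.div_div_eq_div_mul]
        congr 1
        rw [pow_succ]; ring
      simp only [hdiv] at hp12 hxp ⊢
      rcases Nat.even_or_odd x with hxe | hxo
      · -- all even
        have hx2 : x % 2 = 0 := Nat.even_iff.1 hxe
        have hp1' : p1 % 2 = 0 := by omega
        have hp2' : p2 % 2 = 0 := by omega
        have e1 : (everyOther l)[p1/2]'(by rw [everyOther_length]; omega) = l[p1] := by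
          rw [everyOther_get l (p1/2) (by omega)]; congr 1; omega
        have e2 : (everyOther l)[p2/2]'(by rw [everyOther_length]; omega) = l[p2] := by
          rw [everyOther_get l (p2/2) (by omega)]; congr 1; omega
        have e3 : (everyOther l)[x/2]'(by rw [everyOther_length]; omega) = l[x] := by
          rw [everyOther_get l (x/2) (by omega)]; congr 1; omega
        have := ih (everyOther l) (hortonLeft hH) (x/2) (p1/2) (p2/2)
          (by rw [everyOther_length]; omega) (by rw [everyOther_length]; omega)
          (by rw [everyOther_length]; omega)
          (key _ _ ha1) (key _ _ ha2) hp12 hxp (by omega)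
        rw [e1, e2, e3] at this
        exact this
      · -- all odd
        have hx2 : x % 2 = 1 := Nat.odd_iff.1 hxo
        have hp1' : p1 % 2 = 1 := by omega
        have hp2' : p2 % 2 = 1 := by omega
        have e1 : (everyOther l.tail)[p1/2]'(by rw [eoTail_length]; omega) = l[p1] := by
          rw [eoTail_get l (p1/2) (by omega)]; congr 1; omega
        have e2 : (everyOther l.tail)[p2/2]'(by rw [eoTail_length]; omega) = l[p2] := by
          rw [eoTail_get l (p2/2) (by omega)]; congr 1; omega
        have e3 : (everyOther l.tail)[x/2]'(by rw [eoTail_length]; omega) = l[x] := by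
          rw [eoTail_get l (x/2) (by omega)]; congr 1; omega
        have := ih (everyOther l.tail) (hortonRight hH) (x/2) (p1/2) (p2/2)
          (by rw [eoTail_length]; omega) (by rw [eoTail_length]; omega)
          (by rw [eoTail_length]; omega)
          (key _ _ ha1) (key _ _ ha2) hp12 hxp (by omega)
        rw [e1, e2, e3] at this
        exact this


def cross (a b p : ℝ × ℝ) : ℝ := (b.1-a.1)*(p.2-a.2)-(b.2-a.2)*(p.1-a.1)

theorem cross_swap (a b p : ℝ × ℝ) : cross b a p = - cross a b p := by
  simp only [cross]; ring

theorem cross_self_left (a b : ℝ × ℝ) : cross a b a = 0 := by simp [cross]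

theorem cross_self_right (a b : ℝ × ℝ) : cross a b b = 0 := by simp [cross]; ring

theorem cross_rot (u v w : ℝ × ℝ) : cross u v w = - cross u w v := by
  simp only [cross]; ring

theorem above_iff {a b p : ℝ × ℝ} (h : a.1 < b.1) : AboveLine a b p ↔ 0 < cross a b p := by
  have hD : 0 < b.1 - a.1 := by linarith
  have hs : (b.2 - a.2) = (b.2-a.2)/(b.1-a.1)*(b.1-a.1) := (div_mul_cancel₀ _ (ne_of_gt hD)).symm
  have hc : cross a b p = (b.1-a.1)*(p.2 - (a.2 + (b.2-a.2)/(b.1-a.1)*(p.1-a.1))) := by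
    rw [cross]; linear_combination (a.1 - p.1) * hs
  unfold AboveLine
  rw [hc]
  constructor
  · intro h'
    have hX : 0 < p.2 - (a.2 + (b.2-a.2)/(b.1-a.1)*(p.1-a.1)) := by linarith
    exact mul_pos hD hX
  · intro h'; nlinarith
theorem below_iff {a b p : ℝ × ℝ} (h : a.1 < b.1) : BelowLine a b p ↔ cross a b p < 0 := by
  have hD : 0 < b.1 - a.1 := by linarith
  have hs : (b.2 - a.2) = (b.2-a.2)/(b.1-a.1)*(b.1-a.1) := (div_mul_cancel₀ _ (ne_of_gt hD)).symm
  have hc : cross a b p = (b.1-a.1)*(p.2 - (a.2 + (b.2-a.2)/(b.1-a.1)*(p.1-a.1))) := by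
    rw [cross]; linear_combination (a.1 - p.1) * hs
  unfold BelowLine
  rw [hc]
  constructor
  · intro h'
    have hX : p.2 - (a.2 + (b.2-a.2)/(b.1-a.1)*(p.1-a.1)) < 0 := by linarith
    nlinarith
  · intro h'; nlinarith

theorem cross_comb {a b x y : ℝ × ℝ} {α β : ℝ} (hs : α + β = 1) :
    cross a b (α • x + β • y) = α * cross a b x + β * cross a b y := by
  have hβ : β = 1 - α := by linarith
  subst hβ
  simp only [cross, Prod.fst_add, Prod.snd_add, Prod.smul_fst, Prod.smul_snd, smul_eq_mul]
  ring

theorem cross_comb3 {a b x y z : ℝ × ℝ} {α β γ : ℝ} (hs : α + β + γ = 1) :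
    cross a b (α • x + β • y + γ • z) = α * cross a b x + β * cross a b y + γ * cross a b z := by
  have hγ : γ = 1 - α - β := by linarith
  subst hγ
  simp only [cross, Prod.fst_add, Prod.snd_add, Prod.smul_fst, Prod.smul_snd, smul_eq_mul]
  ring

theorem convex_cross_le (a b : ℝ × ℝ) (c : ℝ) : Convex ℝ {p : ℝ×ℝ | cross a b p ≤ c} := by
  intro x hx y hy α β hα hβ hs
  simp only [Set.mem_setOf_eq] at *
  rw [cross_comb hs]
  have k1 : α * cross a b x ≤ α * c := mul_le_mul_of_nonneg_left hx hα
  have k2 : β * cross a b y ≤ β * c := mul_le_mul_of_nonneg_left hy hβ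
  have k3 : α * c + β * c = c := by rw [← add_mul, hs, one_mul]
  linarith

theorem convex_cross_lt (a b : ℝ × ℝ) (c : ℝ) : Convex ℝ {p : ℝ×ℝ | cross a b p < c} := by
  intro x hx y hy α β hα hβ hs
  simp only [Set.mem_setOf_eq] at *
  rw [cross_comb hs]
  rcases eq_or_lt_of_le hα with h0 | h0
  · have : α = 0 := h0.symm
    subst this
    have : β = 1 := by linarith
    subst this
    simpa using hy
  · have k1 : α * cross a b x < α * c := (mul_lt_mul_iff_right₀ h0).2 hx
    have k2 : β * cross a b y ≤ β * c := mul_le_mul_of_nonneg_left (le_of_lt hy) hβ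
    have k3 : α * c + β * c = c := by rw [← add_mul, hs, one_mul]
    linarith

theorem hull_cross_le {a b u v w : ℝ × ℝ} {c : ℝ} (hu : cross a b u ≤ c)
    (hv : cross a b v ≤ c) (hw : cross a b w ≤ c) :
    convexHull ℝ ({u,v,w} : Set (ℝ×ℝ)) ⊆ {p : ℝ×ℝ | cross a b p ≤ c} := by
  apply convexHull_min _ (convex_cross_le a b c)
  intro p hp
  rcases hp with h | h | h <;> subst h <;> assumption

theorem hull_cross_lt {a b u v w : ℝ × ℝ} {c : ℝ} (hu : cross a b u < c)
    (hv : cross a b v < c) (hw : cross a b w < c) :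
    convexHull ℝ ({u,v,w} : Set (ℝ×ℝ)) ⊆ {p : ℝ×ℝ | cross a b p < c} := by
  apply convexHull_min _ (convex_cross_lt a b c)
  intro p hp
  rcases hp with h | h | h <;> subst h <;> assumption

/-- q strictly above the line, all vertices weakly below: q not in hull. -/
theorem excl_le {a b u v w q : ℝ × ℝ} (hu : cross a b u ≤ 0) (hv : cross a b v ≤ 0)
    (hw : cross a b w ≤ 0) (hq : 0 < cross a b q) :
    q ∉ convexHull ℝ ({u,v,w} : Set (ℝ×ℝ)) := by
  intro h
  have := hull_cross_le hu hv hw h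
  simp only [Set.mem_setOf_eq] at this
  linarith

/-- all vertices strictly above the line, q on the line: q not in hull. -/
theorem excl_zero {a b u v w q : ℝ × ℝ} (hu : 0 < cross a b u) (hv : 0 < cross a b v)
    (hw : 0 < cross a b w) (hq : cross a b q = 0) :
    q ∉ convexHull ℝ ({u,v,w} : Set (ℝ×ℝ)) := by
  intro h
  have hneg : cross b a u < 0 := by rw [cross_swap]; linarith
  have hneg2 : cross b a v < 0 := by rw [cross_swap]; linarith
  have hneg3 : cross b a w < 0 := by rw [cross_swap]; linarith
  have := hull_cross_lt hneg hneg2 hneg3 h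
  simp only [Set.mem_setOf_eq] at this
  rw [cross_swap] at this
  linarith

theorem comb3 {t₁ t₂ t₃ p : ℝ × ℝ} (hp : p ∈ convexHull ℝ ({t₁,t₂,t₃} : Set (ℝ×ℝ))) :
    ∃ α β γ : ℝ, 0 ≤ α ∧ 0 ≤ β ∧ 0 ≤ γ ∧ α + β + γ = 1 ∧ p = α•t₁ + β•t₂ + γ•t₃ := by
  rw [show ({t₁,t₂,t₃} : Set (ℝ×ℝ)) = insert t₁ {t₂,t₃} from rfl,
    convexHull_insert ⟨t₂, by simp⟩, convexHull_pair] at hp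
  rw [mem_convexJoin] at hp
  obtain ⟨x, hx, y, hy, hseg⟩ := hp
  rw [Set.mem_singleton_iff] at hx
  subst hx
  obtain ⟨α', β', hα', hβ', hsum', hy'⟩ := hy
  obtain ⟨s, t, hs, ht, hst, hp'⟩ := hseg
  refine ⟨s, t*α', t*β', hs, by positivity, by positivity, by nlinarith, ?_⟩
  rw [← hp', ← hy']
  simp only [smul_add, smul_smul]
  abel

/-- the convex-combination trick: two vertices strictly above line through q and
third vertex t₃; then q in hull forces q = t₃. -/
theorem excl_comb {a b t₁ t₂ t₃ q : ℝ × ℝ} (h1 : 0 < cross a b t₁) (h2 : 0 < cross a b t₂)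
    (h3 : cross a b t₃ = 0) (hq : cross a b q = 0) (hne : q ≠ t₃) :
    q ∉ convexHull ℝ ({t₁,t₂,t₃} : Set (ℝ×ℝ)) := by
  intro h
  obtain ⟨α, β, γ, hα, hβ, hγ, hsum, hcomb⟩ := comb3 h
  have hval : cross a b q = α * cross a b t₁ + β * cross a b t₂ + γ * cross a b t₃ := by
    rw [hcomb]; exact cross_comb3 hsum
  rw [hq, h3] at hval
  have hα0 : α = 0 := by nlinarith
  have hβ0 : β = 0 := by nlinarith
  have hγ1 : γ = 1 := by linarith
  rw [hα0, hβ0, hγ1] at hcomb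
  simp at hcomb
  exact hne hcomb

theorem set3_rot (x y z : ℝ × ℝ) : ({x,y,z} : Set (ℝ×ℝ)) = {y,z,x} := by
  ext p; simp only [Set.mem_insert_iff, Set.mem_singleton_iff]; tauto

theorem set3_swap23 (x y z : ℝ × ℝ) : ({x,y,z} : Set (ℝ×ℝ)) = {x,z,y} := by
  ext p; simp only [Set.mem_insert_iff, Set.mem_singleton_iff]; tauto

/-- strict interior bound along a cross functional -/
theorem interior_cross_lt {a b u v w p : ℝ × ℝ} {c : ℝ} (hne : a ≠ b)
    (hu : cross a b u ≤ c) (hv : cross a b v ≤ c) (hw : cross a b w ≤ c)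
    (hp : p ∈ interior (convexHull ℝ ({u,v,w} : Set (ℝ×ℝ)))) : cross a b p < c := by
  have hsub : convexHull ℝ ({u,v,w} : Set (ℝ×ℝ)) ⊆ {x : ℝ×ℝ | cross a b x ≤ c} := by
    apply convexHull_min _ (convex_cross_le a b c)
    intro x hx
    rcases hx with h | h | h <;> subst h <;> assumption
  have hK : convexHull ℝ ({u,v,w} : Set (ℝ×ℝ)) ∈ nhds p := mem_interior_iff_mem_nhds.1 hp
  obtain ⟨ε, hε, hball⟩ := Metric.mem_nhds_iff.1 hK
  set d : ℝ × ℝ := (-(b.2-a.2), b.1-a.1) with hd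
  have hdne : d.1 ≠ 0 ∨ d.2 ≠ 0 := by
    by_contra hcon
    push_neg at hcon
    apply hne
    have h1 : b.2 = a.2 := by have := hcon.1; simp [hd] at this; linarith
    have h2 : b.1 = a.1 := by have := hcon.2; simp [hd] at this; linarith
    exact (Prod.ext_iff.2 ⟨h2, h1⟩ : b = a).symm
  have hdpos : 0 < |d.1| + |d.2| := by
    rcases hdne with h | h
    · have := abs_pos.2 h; positivity
    · have := abs_pos.2 h
      have : 0 < |d.2| := this
      positivity
  set t : ℝ := ε / (2*(|d.1| + |d.2|)) with htdef
  have ht : 0 < t := by positivity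
  set q : ℝ × ℝ := p + t • d with hqdef
  have half_trick : ε/(2*(|d.1| + |d.2|))*(|d.1| + |d.2|) < ε := by
    rw [div_mul_eq_mul_div, div_lt_iff₀ (by positivity)]
    nlinarith
  have hdist : dist q p < ε := by
    have e1 : q.1 - p.1 = t * d.1 := by simp [hqdef]
    have e2 : q.2 - p.2 = t * d.2 := by simp [hqdef]
    have hd1 : dist q.1 p.1 = |t * d.1| := by rw [Real.dist_eq, e1]
    have hd2 : dist q.2 p.2 = |t * d.2| := by rw [Real.dist_eq, e2]
    rw [Prod.dist_eq, hd1, hd2]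
    have b1 : |t * d.1| ≤ t * (|d.1| + |d.2|) := by
      rw [abs_mul, abs_of_pos ht]
      have := abs_nonneg d.2
      nlinarith [abs_nonneg d.1]
    have b2 : |t * d.2| ≤ t * (|d.1| + |d.2|) := by
      rw [abs_mul, abs_of_pos ht]
      nlinarith [abs_nonneg d.1, abs_nonneg d.2]
    exact lt_of_le_of_lt (max_le b1 b2) half_trick
  have hqK : q ∈ convexHull ℝ ({u,v,w} : Set (ℝ×ℝ)) := hball (Metric.mem_ball.2 hdist)
  have hqc : cross a b q ≤ c := hsub hqK
  have hgain : cross a b q = cross a b p + t * ((b.1-a.1)^2 + (b.2-a.2)^2) := by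
    simp only [cross, hqdef, Prod.fst_add, Prod.snd_add, Prod.smul_fst, Prod.smul_snd,
      smul_eq_mul, hd]
    ring
  have hpos : 0 < (b.1-a.1)^2 + (b.2-a.2)^2 := by
    rcases hdne with h | h
    · simp [hd] at h
      have : b.2 - a.2 ≠ 0 := fun hc => h (by linarith)
      positivity
    · simp [hd] at h
      have : b.1 - a.1 ≠ 0 := fun hc => h (by linarith)
      positivity
  nlinarith


structure Cert where
  q : ℕ
  rule : ℕ
  p1 : ℕ
  p2 : ℕ
  kq : ℕ
  ka : ℕ
  kb : ℕ
  kc : ℕ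
deriving DecidableEq

structure Rec3 where
  u : ℕ
  v : ℕ
  w : ℕ
  hasSurv : Bool
  surv : ℕ
  pu : ℕ
  pv : ℕ
  certs : List Cert
deriving DecidableEq

theorem orE {a b : Bool} (h : (a || b) = true) : a = true ∨ b = true := by
  cases a <;> simp_all
theorem andE {a b : Bool} (h : (a && b) = true) : a = true ∧ b = true := by
  cases a <;> simp_all
theorem beqE {a b : ℕ} (h : (a == b) = true) : a = b := by
  simpa using h

def recsAt (t : ℕ) : List Rec3 :=
  match t with
  | 2 => [⟨0,1,2,false,0,1,4,[]⟩]
  | 3 => [⟨0,1,3,false,0,1,4,[⟨2,6,0,2,0,0,0,0⟩]⟩,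
      ⟨0,2,3,false,0,1,16,[⟨1,7,1,3,2,0,0,0⟩]⟩,
      ⟨1,2,3,false,0,4,16,[]⟩]
  | 4 => [⟨0,1,4,true,2,1,4,[⟨3,0,1,5,1,0,0,0⟩]⟩,
      ⟨0,2,4,false,0,1,16,[⟨1,0,2,6,0,1,0,1⟩, ⟨3,0,1,5,1,0,0,0⟩]⟩,
      ⟨0,3,4,true,2,1,64,[⟨1,7,1,3,1,0,0,0⟩]⟩,
      ⟨1,2,4,false,0,4,16,[⟨3,0,1,5,1,0,0,0⟩]⟩,
      ⟨1,3,4,false,0,4,64,[⟨2,6,2,4,2,0,0,0⟩]⟩,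
      ⟨2,3,4,false,0,16,64,[]⟩]
  | 5 => [⟨0,1,5,false,0,1,4,[⟨2,6,0,2,0,0,0,0⟩, ⟨3,0,1,5,1,0,0,0⟩, ⟨4,6,0,4,0,0,0,0⟩]⟩,
      ⟨0,2,5,false,0,1,16,[⟨1,7,1,5,2,0,0,0⟩, ⟨3,0,1,5,1,0,0,0⟩, ⟨4,6,0,4,0,0,1,0⟩]⟩,
      ⟨0,3,5,true,1,1,64,[⟨2,6,0,2,0,0,0,0⟩, ⟨4,6,0,4,0,0,0,0⟩]⟩,
      ⟨0,4,5,true,2,1,256,[⟨1,7,1,5,2,0,0,0⟩, ⟨3,0,1,5,1,0,0,0⟩]⟩,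
      ⟨1,2,5,false,0,4,16,[⟨3,0,1,5,1,0,0,0⟩, ⟨4,1,2,6,1,0,0,0⟩]⟩,
      ⟨1,3,5,false,0,4,64,[⟨2,1,1,5,0,0,1,0⟩, ⟨4,1,1,5,0,0,1,0⟩]⟩,
      ⟨1,4,5,false,0,4,256,[⟨2,6,2,4,1,0,0,0⟩, ⟨3,0,1,5,1,0,0,0⟩]⟩,
      ⟨2,3,5,false,0,16,64,[⟨4,1,2,6,1,0,0,0⟩]⟩,
      ⟨2,4,5,false,0,16,256,[⟨3,0,1,5,1,0,0,0⟩]⟩,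
      ⟨3,4,5,false,0,64,256,[]⟩]
  | 6 => [⟨0,1,6,true,2,1,4,[⟨3,0,1,5,1,0,0,0⟩, ⟨4,6,0,4,0,0,0,1⟩, ⟨5,0,1,9,2,0,0,0⟩]⟩,
      ⟨0,2,6,false,0,1,16,[⟨1,0,2,6,0,1,0,0⟩, ⟨3,0,1,5,1,0,0,0⟩, ⟨4,6,0,4,0,0,1,1⟩, ⟨5,0,1,9,2,0,0,0⟩]⟩,
      ⟨0,3,6,true,2,1,64,[⟨1,7,1,3,1,0,0,0⟩, ⟨4,6,0,4,0,0,0,1⟩, ⟨5,7,3,5,1,0,0,0⟩]⟩,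
      ⟨0,4,6,false,0,1,256,[⟨1,0,2,6,0,1,1,0⟩, ⟨2,7,2,6,2,1,1,0⟩, ⟨3,0,1,5,1,0,0,0⟩, ⟨5,0,1,9,2,0,0,0⟩]⟩,
      ⟨0,5,6,true,2,1,1024,[⟨1,7,1,5,1,0,0,0⟩, ⟨3,0,1,5,1,0,0,0⟩, ⟨4,6,0,4,0,0,0,1⟩]⟩,
      ⟨1,2,6,false,0,4,16,[⟨3,0,1,5,1,0,0,0⟩, ⟨4,1,2,6,1,0,0,0⟩, ⟨5,0,1,9,2,0,0,0⟩]⟩,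
      ⟨1,3,6,true,5,4,64,[⟨2,1,6,14,2,0,0,0⟩, ⟨4,1,2,6,1,0,0,0⟩]⟩,
      ⟨1,4,6,true,2,4,256,[⟨3,0,1,5,1,0,0,0⟩, ⟨5,0,1,9,2,0,0,0⟩]⟩,
      ⟨1,5,6,false,0,4,1024,[⟨2,1,6,14,2,0,0,0⟩, ⟨3,0,1,5,1,0,0,0⟩, ⟨4,1,2,6,1,0,0,0⟩]⟩,
      ⟨2,3,6,false,0,16,64,[⟨4,1,2,6,1,0,0,0⟩, ⟨5,7,3,5,1,0,0,0⟩]⟩,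
      ⟨2,4,6,false,0,16,256,[⟨3,0,1,5,1,0,0,0⟩, ⟨5,0,1,9,2,0,0,0⟩]⟩,
      ⟨2,5,6,false,0,16,1024,[⟨3,0,1,5,1,0,0,0⟩, ⟨4,1,2,6,1,0,0,0⟩]⟩,
      ⟨3,4,6,false,0,64,256,[⟨5,7,3,5,0,0,0,0⟩]⟩,
      ⟨3,5,6,false,0,64,1024,[⟨4,1,2,6,1,0,0,0⟩]⟩,
      ⟨4,5,6,false,0,256,1024,[]⟩]
  | 7 => [⟨0,1,7,true,5,1,4,[⟨2,6,0,2,0,0,0,0⟩, ⟨3,7,3,7,2,0,1,0⟩, ⟨4,6,0,4,0,0,0,0⟩, ⟨6,6,0,6,0,0,0,0⟩]⟩,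
      ⟨0,2,7,true,6,1,16,[⟨1,7,1,7,2,0,0,0⟩, ⟨3,7,3,7,2,0,0,0⟩, ⟨4,6,0,4,0,0,1,0⟩, ⟨5,7,5,7,2,0,0,0⟩]⟩,
      ⟨0,5,7,true,1,1,1024,[⟨2,6,0,2,0,0,0,0⟩, ⟨3,7,3,7,2,0,1,0⟩, ⟨4,6,0,4,0,0,0,0⟩, ⟨6,6,0,6,0,0,0,0⟩]⟩,
      ⟨0,6,7,true,2,1,4096,[⟨1,7,1,7,2,0,0,0⟩, ⟨3,7,3,7,2,0,0,0⟩, ⟨4,6,0,4,0,0,1,0⟩, ⟨5,7,5,7,2,0,0,0⟩]⟩,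
      ⟨1,2,7,true,5,4,16,[⟨3,7,3,7,2,1,0,0⟩, ⟨4,1,2,6,1,0,0,0⟩, ⟨6,6,2,6,1,0,0,0⟩]⟩,
      ⟨1,3,7,false,0,4,64,[⟨2,1,1,5,0,0,1,1⟩, ⟨4,1,1,5,0,0,1,1⟩, ⟨5,6,1,5,0,0,1,1⟩, ⟨6,1,1,5,0,0,1,1⟩]⟩,
      ⟨1,4,7,true,5,4,256,[⟨2,6,2,4,1,0,0,0⟩, ⟨3,7,3,7,2,1,0,0⟩, ⟨6,6,4,6,1,0,0,0⟩]⟩,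
      ⟨1,5,7,false,0,4,1024,[⟨2,1,1,5,0,0,0,1⟩, ⟨3,7,3,7,2,1,1,0⟩, ⟨4,1,1,5,0,0,0,1⟩, ⟨6,1,1,5,0,0,0,1⟩]⟩,
      ⟨1,6,7,true,5,4,4096,[⟨2,1,6,14,2,0,0,0⟩, ⟨3,7,3,7,2,1,0,0⟩, ⟨4,1,2,6,1,0,0,0⟩]⟩,
      ⟨2,3,7,true,5,16,64,[⟨4,1,2,6,1,0,0,0⟩, ⟨6,6,2,6,0,0,0,0⟩]⟩,
      ⟨2,4,7,true,6,16,256,[⟨3,7,3,7,2,0,0,0⟩, ⟨5,7,5,7,2,0,0,0⟩]⟩,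
      ⟨2,5,7,false,0,16,1024,[⟨3,7,3,7,2,0,1,0⟩, ⟨4,1,2,6,1,0,0,0⟩, ⟨6,6,2,6,0,0,0,0⟩]⟩,
      ⟨2,6,7,false,0,16,4096,[⟨3,7,3,7,2,0,0,0⟩, ⟨4,1,2,6,1,0,0,0⟩, ⟨5,7,5,7,2,0,0,0⟩]⟩,
      ⟨3,4,7,true,5,64,256,[⟨6,6,4,6,1,0,0,0⟩]⟩,
      ⟨3,5,7,false,0,64,1024,[⟨4,1,1,5,0,1,0,1⟩, ⟨6,1,1,5,0,1,0,1⟩]⟩,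
      ⟨3,6,7,true,5,64,4096,[⟨4,1,2,6,1,0,0,0⟩]⟩,
      ⟨4,5,7,false,0,256,1024,[⟨6,6,4,6,0,0,0,0⟩]⟩,
      ⟨4,6,7,false,0,256,4096,[⟨5,7,5,7,2,0,0,0⟩]⟩,
      ⟨5,6,7,false,0,1024,4096,[]⟩]
  | 8 => [⟨0,2,8,true,4,1,16,[⟨1,0,2,6,0,1,0,1⟩, ⟨3,0,1,5,1,0,0,0⟩, ⟨5,0,1,9,2,0,0,0⟩, ⟨6,0,2,10,2,1,0,1⟩, ⟨7,0,1,5,1,0,0,0⟩]⟩,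
      ⟨0,4,8,false,0,1,256,[⟨1,0,2,6,0,1,1,1⟩, ⟨2,0,4,12,1,2,0,2⟩, ⟨3,0,1,5,1,0,0,0⟩, ⟨5,0,1,9,2,0,0,0⟩, ⟨6,0,2,10,2,1,1,1⟩, ⟨7,0,1,5,1,0,0,0⟩]⟩,
      ⟨0,6,8,true,4,1,4096,[⟨1,0,2,6,0,1,0,1⟩, ⟨2,7,2,6,1,1,0,1⟩, ⟨3,0,1,5,1,0,0,0⟩, ⟨5,0,1,9,2,0,0,0⟩, ⟨7,0,1,5,1,0,0,0⟩]⟩,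
      ⟨1,2,8,true,6,4,16,[⟨3,0,1,5,1,0,0,0⟩, ⟨4,6,4,8,2,0,1,0⟩, ⟨5,0,1,9,2,0,0,0⟩, ⟨7,0,1,5,1,0,0,0⟩]⟩,
      ⟨1,3,8,true,5,4,64,[⟨2,6,2,8,2,0,0,0⟩, ⟨4,6,4,8,2,0,0,0⟩, ⟨6,6,6,8,2,0,0,0⟩, ⟨7,0,3,11,2,1,0,0⟩]⟩,
      ⟨1,5,8,false,0,4,1024,[⟨2,6,2,8,2,0,0,0⟩, ⟨3,0,1,5,1,0,0,0⟩, ⟨4,6,4,8,2,0,0,0⟩, ⟨6,6,6,8,2,0,0,0⟩, ⟨7,0,1,5,1,0,0,0⟩]⟩,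
      ⟨1,6,8,true,2,4,4096,[⟨3,0,1,5,1,0,0,0⟩, ⟨4,6,4,8,2,0,1,0⟩, ⟨5,0,1,9,2,0,0,0⟩, ⟨7,0,1,5,1,0,0,0⟩]⟩,
      ⟨1,7,8,true,5,4,16384,[⟨2,6,2,8,2,0,0,0⟩, ⟨3,7,3,7,1,1,0,0⟩, ⟨4,6,4,8,2,0,0,0⟩, ⟨6,6,6,8,2,0,0,0⟩]⟩,
      ⟨2,3,8,true,6,16,64,[⟨4,6,4,8,2,1,0,0⟩, ⟨5,7,3,5,1,0,0,0⟩, ⟨7,0,3,11,2,0,0,0⟩]⟩,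
      ⟨2,4,8,false,0,16,256,[⟨3,0,1,5,1,0,0,0⟩, ⟨5,0,1,9,2,0,0,0⟩, ⟨6,0,2,10,2,0,1,1⟩, ⟨7,0,1,5,1,0,0,0⟩]⟩,
      ⟨2,5,8,true,6,16,1024,[⟨3,0,1,5,1,0,0,0⟩, ⟨4,6,4,8,2,1,0,0⟩, ⟨7,0,1,5,1,0,0,0⟩]⟩,
      ⟨2,6,8,false,0,16,4096,[⟨3,0,1,5,1,0,0,0⟩, ⟨4,6,4,8,2,1,1,0⟩, ⟨5,0,1,9,2,0,0,0⟩, ⟨7,0,1,5,1,0,0,0⟩]⟩,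
      ⟨2,7,8,true,6,16,16384,[⟨3,7,3,7,1,0,0,0⟩, ⟨4,6,4,8,2,1,0,0⟩, ⟨5,7,5,7,1,0,0,0⟩]⟩,
      ⟨3,4,8,true,6,64,256,[⟨5,7,3,5,0,0,0,0⟩, ⟨7,0,3,11,2,0,0,0⟩]⟩,
      ⟨3,5,8,false,0,64,1024,[⟨4,6,4,8,2,0,0,0⟩, ⟨6,6,6,8,2,0,0,0⟩, ⟨7,0,3,11,2,0,1,0⟩]⟩,
      ⟨3,6,8,false,0,64,4096,[⟨4,6,4,8,2,0,1,0⟩, ⟨5,7,3,5,0,0,0,0⟩, ⟨7,0,3,11,2,0,0,0⟩]⟩,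
      ⟨3,7,8,true,5,64,16384,[⟨4,6,4,8,2,0,0,0⟩, ⟨6,6,6,8,2,0,0,0⟩]⟩,
      ⟨4,5,8,true,6,256,1024,[⟨7,0,1,5,1,0,0,0⟩]⟩,
      ⟨4,6,8,false,0,256,4096,[⟨5,0,1,9,2,0,0,0⟩, ⟨7,0,1,5,1,0,0,0⟩]⟩,
      ⟨4,7,8,true,6,256,16384,[⟨5,7,5,7,1,0,0,0⟩]⟩,
      ⟨5,6,8,false,0,1024,4096,[⟨7,0,1,5,1,0,0,0⟩]⟩,
      ⟨5,7,8,false,0,1024,16384,[⟨6,6,6,8,2,0,0,0⟩]⟩,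
      ⟨6,7,8,false,0,4096,16384,[]⟩]
  | 9 => [⟨0,1,9,false,0,1,4,[⟨2,6,0,2,0,0,0,0⟩, ⟨3,0,1,9,1,0,0,0⟩, ⟨4,6,0,4,0,0,0,0⟩, ⟨5,0,1,9,2,0,0,0⟩, ⟨6,6,0,6,0,0,0,0⟩, ⟨7,0,1,9,1,0,0,0⟩, ⟨8,6,0,8,0,0,0,0⟩]⟩,
      ⟨0,2,9,true,6,1,16,[⟨1,7,1,9,2,0,0,0⟩, ⟨3,0,1,9,1,0,0,0⟩, ⟨4,6,0,4,0,0,1,0⟩, ⟨5,0,1,9,2,0,0,0⟩, ⟨7,0,1,9,1,0,0,0⟩, ⟨8,6,0,8,0,0,1,0⟩]⟩,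
      ⟨0,5,9,true,1,1,1024,[⟨2,6,0,2,0,0,0,0⟩, ⟨3,0,5,9,1,0,0,0⟩, ⟨4,6,0,4,0,0,0,0⟩, ⟨6,6,0,6,0,0,0,0⟩, ⟨7,0,3,11,2,0,1,1⟩, ⟨8,6,0,8,0,0,0,0⟩]⟩,
      ⟨0,6,9,true,2,1,4096,[⟨1,7,1,9,2,0,0,0⟩, ⟨3,0,1,9,1,0,0,0⟩, ⟨4,6,0,4,0,0,1,0⟩, ⟨5,0,1,9,2,0,0,0⟩, ⟨7,0,1,9,1,0,0,0⟩, ⟨8,6,0,8,0,0,1,0⟩]⟩,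
      ⟨1,2,9,false,0,4,16,[⟨3,0,1,9,1,0,0,0⟩, ⟨4,1,2,6,1,0,0,0⟩, ⟨5,0,1,9,2,0,0,0⟩, ⟨6,6,2,6,1,0,0,0⟩, ⟨7,0,1,9,1,0,0,0⟩, ⟨8,1,2,6,1,0,0,0⟩]⟩,
      ⟨1,3,9,true,5,4,64,[⟨2,1,1,9,0,0,1,0⟩, ⟨4,1,1,9,0,0,1,0⟩, ⟨6,1,1,9,0,0,1,0⟩, ⟨7,0,3,11,2,1,0,1⟩, ⟨8,1,1,9,0,0,1,0⟩]⟩,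
      ⟨1,4,9,false,0,4,256,[⟨2,6,2,4,1,0,0,0⟩, ⟨3,0,1,9,1,0,0,0⟩, ⟨5,0,1,9,2,0,0,0⟩, ⟨6,6,4,6,1,0,0,0⟩, ⟨7,0,1,9,1,0,0,0⟩, ⟨8,1,4,12,2,0,0,0⟩]⟩,
      ⟨1,5,9,false,0,4,1024,[⟨2,1,1,9,0,0,2,0⟩, ⟨3,0,5,13,1,2,0,2⟩, ⟨4,1,1,9,0,0,2,0⟩, ⟨6,1,1,9,0,0,2,0⟩, ⟨7,0,3,11,2,1,1,1⟩, ⟨8,1,1,9,0,0,2,0⟩]⟩,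
      ⟨1,6,9,false,0,4,4096,[⟨2,1,6,14,2,0,0,0⟩, ⟨3,0,1,9,1,0,0,0⟩, ⟨4,1,2,6,1,0,0,0⟩, ⟨5,0,1,9,2,0,0,0⟩, ⟨7,0,1,9,1,0,0,0⟩, ⟨8,1,2,6,1,0,0,0⟩]⟩,
      ⟨1,7,9,true,5,4,16384,[⟨2,1,1,9,0,0,1,0⟩, ⟨3,7,3,7,1,1,0,1⟩, ⟨4,1,1,9,0,0,1,0⟩, ⟨6,1,1,9,0,0,1,0⟩, ⟨8,1,1,9,0,0,1,0⟩]⟩,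
      ⟨1,8,9,false,0,4,65536,[⟨2,6,2,8,1,0,0,0⟩, ⟨3,0,1,9,1,0,0,0⟩, ⟨4,6,4,8,1,0,0,0⟩, ⟨5,0,1,9,2,0,0,0⟩, ⟨6,6,6,8,1,0,0,0⟩, ⟨7,0,1,9,1,0,0,0⟩]⟩,
      ⟨2,3,9,true,5,16,64,[⟨4,1,2,6,1,0,0,0⟩, ⟨6,6,2,6,0,0,0,0⟩, ⟨7,0,3,11,2,0,0,1⟩, ⟨8,1,2,6,1,0,0,0⟩]⟩,
      ⟨2,4,9,true,6,16,256,[⟨3,0,1,9,1,0,0,0⟩, ⟨5,0,1,9,2,0,0,0⟩, ⟨7,0,1,9,1,0,0,0⟩, ⟨8,1,4,12,2,1,0,0⟩]⟩,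
      ⟨2,5,9,false,0,16,1024,[⟨3,0,5,9,1,0,0,0⟩, ⟨4,1,2,6,1,0,0,0⟩, ⟨6,6,2,6,0,0,0,0⟩, ⟨7,0,3,11,2,0,1,1⟩, ⟨8,1,2,6,1,0,0,0⟩]⟩,
      ⟨2,6,9,false,0,16,4096,[⟨3,0,1,9,1,0,0,0⟩, ⟨4,1,2,6,1,0,0,0⟩, ⟨5,0,1,9,2,0,0,0⟩, ⟨7,0,1,9,1,0,0,0⟩, ⟨8,1,2,6,1,0,0,0⟩]⟩,
      ⟨2,7,9,true,5,16,16384,[⟨3,7,3,7,1,0,0,1⟩, ⟨4,1,2,6,1,0,0,0⟩, ⟨6,6,2,6,0,0,0,0⟩, ⟨8,1,2,6,1,0,0,0⟩]⟩,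
      ⟨2,8,9,true,6,16,65536,[⟨3,0,1,9,1,0,0,0⟩, ⟨4,6,4,8,1,1,0,0⟩, ⟨5,0,1,9,2,0,0,0⟩, ⟨7,0,1,9,1,0,0,0⟩]⟩,
      ⟨3,4,9,true,5,64,256,[⟨6,6,4,6,1,0,0,0⟩, ⟨7,0,3,11,2,0,0,1⟩, ⟨8,1,4,12,2,0,0,0⟩]⟩,
      ⟨3,5,9,false,0,64,1024,[⟨4,1,1,9,0,1,2,0⟩, ⟨6,1,1,9,0,1,2,0⟩, ⟨7,0,3,11,2,0,1,1⟩, ⟨8,1,1,9,0,1,2,0⟩]⟩,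
      ⟨3,6,9,true,5,64,4096,[⟨4,1,2,6,1,0,0,0⟩, ⟨7,0,3,11,2,0,0,1⟩, ⟨8,1,2,6,1,0,0,0⟩]⟩,
      ⟨3,7,9,false,0,64,16384,[⟨4,1,1,9,0,1,1,0⟩, ⟨5,6,5,9,2,1,1,0⟩, ⟨6,1,1,9,0,1,1,0⟩, ⟨8,1,1,9,0,1,1,0⟩]⟩,
      ⟨3,8,9,true,5,64,65536,[⟨4,6,4,8,1,0,0,0⟩, ⟨6,6,6,8,1,0,0,0⟩, ⟨7,0,3,11,2,0,0,1⟩]⟩,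
      ⟨4,5,9,false,0,256,1024,[⟨6,6,4,6,0,0,0,0⟩, ⟨7,0,3,11,2,0,1,1⟩, ⟨8,1,4,12,2,0,0,0⟩]⟩,
      ⟨4,6,9,false,0,256,4096,[⟨5,0,1,9,2,0,0,0⟩, ⟨7,0,1,9,1,0,0,0⟩, ⟨8,1,4,12,2,0,1,0⟩]⟩,
      ⟨4,7,9,true,5,256,16384,[⟨6,6,4,6,0,0,0,0⟩, ⟨8,1,4,12,2,0,0,0⟩]⟩,
      ⟨4,8,9,true,6,256,65536,[⟨5,0,1,9,2,0,0,0⟩, ⟨7,0,1,9,1,0,0,0⟩]⟩,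
      ⟨5,6,9,false,0,1024,4096,[⟨7,0,3,11,2,1,0,1⟩, ⟨8,1,2,6,1,0,0,0⟩]⟩,
      ⟨5,7,9,false,0,1024,16384,[⟨6,1,1,9,0,2,1,0⟩, ⟨8,1,1,9,0,2,1,0⟩]⟩,
      ⟨5,8,9,false,0,1024,65536,[⟨6,6,6,8,1,0,0,0⟩, ⟨7,0,3,11,2,1,0,1⟩]⟩,
      ⟨6,7,9,false,0,4096,16384,[⟨8,1,2,6,1,0,0,0⟩]⟩,
      ⟨6,8,9,false,0,4096,65536,[⟨7,0,1,9,1,0,0,0⟩]⟩,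
      ⟨7,8,9,false,0,16384,65536,[]⟩]
  | 10 => [⟨2,3,10,true,6,16,64,[⟨4,1,2,10,1,0,0,0⟩, ⟨5,7,3,5,1,0,0,0⟩, ⟨7,0,3,11,2,0,0,0⟩, ⟨8,1,2,10,1,0,0,0⟩, ⟨9,7,3,9,1,0,0,0⟩]⟩,
      ⟨2,5,10,true,6,16,1024,[⟨3,0,1,5,1,0,0,0⟩, ⟨4,1,2,10,1,0,0,0⟩, ⟨7,0,1,5,1,0,0,0⟩, ⟨8,1,2,10,1,0,0,0⟩, ⟨9,7,5,9,1,0,0,0⟩]⟩,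
      ⟨2,6,10,false,0,16,4096,[⟨3,0,1,5,1,0,0,0⟩, ⟨4,1,2,10,1,0,2,0⟩, ⟨5,0,1,9,2,0,0,0⟩, ⟨7,0,1,5,1,0,0,0⟩, ⟨8,1,2,10,1,0,2,0⟩, ⟨9,0,1,17,3,0,0,0⟩]⟩,
      ⟨2,7,10,true,6,16,16384,[⟨3,7,3,7,1,0,0,0⟩, ⟨4,1,2,10,1,0,0,0⟩, ⟨5,7,5,7,1,0,0,0⟩, ⟨8,1,2,10,1,0,0,0⟩, ⟨9,7,7,9,1,0,0,0⟩]⟩,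
      ⟨2,9,10,true,6,16,262144,[⟨3,0,1,9,1,0,0,0⟩, ⟨4,1,2,10,1,0,0,0⟩, ⟨5,0,1,9,2,0,0,0⟩, ⟨7,0,1,9,1,0,0,0⟩, ⟨8,1,2,10,1,0,0,0⟩]⟩,
      ⟨3,5,10,true,9,64,1024,[⟨4,1,2,10,1,0,0,0⟩, ⟨6,6,6,10,2,0,0,0⟩, ⟨7,0,3,11,2,0,1,0⟩, ⟨8,1,2,10,1,0,0,0⟩]⟩,
      ⟨3,6,10,false,0,64,4096,[⟨4,1,2,10,1,0,2,0⟩, ⟨5,7,3,5,0,0,0,0⟩, ⟨7,0,3,11,2,0,0,0⟩, ⟨8,1,2,10,1,0,2,0⟩, ⟨9,7,3,9,0,0,0,0⟩]⟩,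
      ⟨3,9,10,true,5,64,262144,[⟨4,1,2,10,1,0,0,0⟩, ⟨6,6,6,10,2,0,0,0⟩, ⟨7,0,3,11,2,0,1,0⟩, ⟨8,1,2,10,1,0,0,0⟩]⟩,
      ⟨4,8,10,false,0,256,65536,[⟨5,0,1,9,2,0,0,0⟩, ⟨6,0,2,10,2,1,1,0⟩, ⟨7,0,1,5,1,0,0,0⟩, ⟨9,0,1,17,3,0,0,0⟩]⟩,
      ⟨5,6,10,false,0,1024,4096,[⟨7,0,1,5,1,0,0,0⟩, ⟨8,1,2,10,1,0,2,0⟩, ⟨9,7,5,9,0,0,0,0⟩]⟩,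
      ⟨5,7,10,true,9,1024,16384,[⟨6,6,6,10,2,0,0,0⟩, ⟨8,1,2,10,1,0,0,0⟩]⟩,
      ⟨5,9,10,false,0,1024,262144,[⟨6,6,6,10,2,0,0,0⟩, ⟨7,0,3,11,2,1,1,0⟩, ⟨8,1,2,10,1,0,0,0⟩]⟩,
      ⟨6,7,10,false,0,4096,16384,[⟨8,1,2,10,1,2,0,0⟩, ⟨9,7,7,9,1,0,0,0⟩]⟩,
      ⟨6,9,10,false,0,4096,262144,[⟨7,0,1,9,1,0,0,0⟩, ⟨8,1,2,10,1,2,0,0⟩]⟩,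
      ⟨7,9,10,false,0,16384,262144,[⟨8,1,2,10,1,0,0,0⟩]⟩]
  | 11 => [⟨2,5,11,true,9,16,1024,[⟨3,7,3,11,2,0,1,0⟩, ⟨4,1,2,6,1,0,0,0⟩, ⟨6,6,2,6,0,0,0,0⟩, ⟨7,0,3,11,2,0,1,0⟩, ⟨8,1,2,6,1,0,0,0⟩, ⟨10,6,2,10,0,0,0,0⟩]⟩,
      ⟨2,6,11,false,0,16,4096,[⟨3,7,3,11,2,0,0,0⟩, ⟨4,1,2,6,1,0,0,0⟩, ⟨5,7,5,11,2,0,0,0⟩, ⟨7,0,3,11,2,0,0,0⟩, ⟨8,1,2,6,1,0,0,0⟩, ⟨9,7,9,11,2,0,0,0⟩, ⟨10,6,2,10,0,0,2,0⟩]⟩,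
      ⟨2,9,11,true,5,16,262144,[⟨3,7,3,11,2,0,1,0⟩, ⟨4,1,2,6,1,0,0,0⟩, ⟨6,6,2,6,0,0,0,0⟩, ⟨7,0,3,11,2,0,1,0⟩, ⟨8,1,2,6,1,0,0,0⟩, ⟨10,6,2,10,0,0,0,0⟩]⟩,
      ⟨3,7,11,false,0,64,16384,[⟨4,1,1,5,0,1,1,1⟩, ⟨5,1,3,11,1,0,2,0⟩, ⟨6,1,1,5,0,1,1,1⟩, ⟨8,1,1,5,0,1,1,1⟩, ⟨9,1,3,11,1,0,2,0⟩, ⟨10,1,1,5,0,1,1,1⟩]⟩,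
      ⟨5,6,11,true,9,1024,4096,[⟨7,0,3,11,2,1,0,0⟩, ⟨8,1,2,6,1,0,0,0⟩, ⟨10,1,6,14,2,0,0,0⟩]⟩,
      ⟨5,9,11,false,0,1024,262144,[⟨6,1,1,9,0,2,0,1⟩, ⟨7,0,3,11,2,1,1,0⟩, ⟨8,1,1,9,0,2,0,1⟩, ⟨10,1,1,9,0,2,0,1⟩]⟩,
      ⟨6,9,11,false,0,4096,262144,[⟨7,0,3,11,2,0,1,0⟩, ⟨8,1,2,6,1,0,0,0⟩, ⟨10,1,6,14,2,0,0,0⟩]⟩]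
  | 12 => [⟨0,10,12,true,4,1,1048576,[⟨1,0,2,10,0,1,0,1⟩, ⟨2,7,2,10,1,1,0,1⟩, ⟨3,0,1,5,1,0,0,0⟩, ⟨5,0,1,9,2,0,0,0⟩, ⟨6,0,2,10,2,1,0,1⟩, ⟨7,0,1,5,1,0,0,0⟩, ⟨8,6,0,8,0,0,1,2⟩, ⟨9,0,1,17,3,0,0,0⟩, ⟨11,0,1,5,1,0,0,0⟩]⟩,
      ⟨2,6,12,true,10,16,4096,[⟨3,0,1,5,1,0,0,0⟩, ⟨4,2,4,20,0,1,1,3⟩, ⟨5,0,1,9,2,0,0,0⟩, ⟨7,0,1,5,1,0,0,0⟩, ⟨8,1,4,12,2,1,1,0⟩, ⟨9,0,1,17,3,0,0,0⟩, ⟨11,0,1,5,1,0,0,0⟩]⟩,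
      ⟨4,8,12,false,0,256,65536,[⟨5,0,1,9,2,0,0,0⟩, ⟨6,0,2,10,2,1,1,1⟩, ⟨7,0,1,5,1,0,0,0⟩, ⟨9,0,1,17,3,0,0,0⟩, ⟨10,0,2,18,3,1,1,1⟩, ⟨11,0,1,5,1,0,0,0⟩]⟩,
      ⟨5,6,12,true,10,1024,4096,[⟨7,0,1,5,1,0,0,0⟩, ⟨8,1,4,12,2,0,1,0⟩, ⟨9,7,5,9,0,0,0,0⟩, ⟨11,0,1,5,1,0,0,0⟩]⟩,
      ⟨5,9,12,false,0,1024,262144,[⟨6,6,6,12,2,0,0,0⟩, ⟨7,0,3,11,2,1,1,0⟩, ⟨8,1,4,12,2,0,0,0⟩, ⟨10,6,10,12,2,0,0,0⟩, ⟨11,0,3,19,3,1,1,0⟩]⟩,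
      ⟨6,9,12,true,10,4096,262144,[⟨7,0,1,9,1,0,0,0⟩, ⟨8,1,4,12,2,1,0,0⟩, ⟨11,0,1,9,1,0,0,0⟩]⟩]
  | 13 => [⟨1,4,13,true,9,4,256,[⟨2,6,2,4,1,0,0,0⟩, ⟨3,0,1,13,1,0,0,0⟩, ⟨5,7,5,13,2,2,0,0⟩, ⟨6,6,4,6,1,0,0,0⟩, ⟨7,0,1,13,1,0,0,0⟩, ⟨8,1,4,12,2,0,0,0⟩, ⟨10,6,4,10,1,0,0,0⟩, ⟨11,0,1,13,1,0,0,0⟩, ⟨12,6,4,12,1,0,0,0⟩]⟩,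
      ⟨2,5,13,true,9,16,1024,[⟨3,0,5,13,1,0,0,0⟩, ⟨4,1,2,6,1,0,0,0⟩, ⟨6,6,2,6,0,0,0,0⟩, ⟨7,0,3,11,2,0,1,1⟩, ⟨8,1,2,6,1,0,0,0⟩, ⟨10,6,2,10,0,0,0,0⟩, ⟨11,0,3,19,3,0,1,1⟩, ⟨12,1,2,6,1,0,0,0⟩]⟩,
      ⟨2,9,13,false,0,16,262144,[⟨3,0,5,13,1,0,2,0⟩, ⟨4,1,2,6,1,0,0,0⟩, ⟨5,7,5,13,2,0,2,0⟩, ⟨6,6,2,6,0,0,0,0⟩, ⟨7,0,3,11,2,0,1,1⟩, ⟨8,1,2,6,1,0,0,0⟩, ⟨10,6,2,10,0,0,0,0⟩, ⟨11,0,3,19,3,0,1,1⟩, ⟨12,1,2,6,1,0,0,0⟩]⟩,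
      ⟨3,7,13,true,11,64,16384,[⟨4,1,1,9,0,1,1,2⟩, ⟨5,2,5,21,0,1,1,3⟩, ⟨6,1,1,9,0,1,1,2⟩, ⟨8,1,1,9,0,1,1,2⟩, ⟨9,1,5,13,2,1,1,0⟩, ⟨10,1,1,9,0,1,1,2⟩, ⟨12,1,1,9,0,1,1,2⟩]⟩,
      ⟨5,6,13,true,9,1024,4096,[⟨7,0,3,11,2,1,0,1⟩, ⟨8,1,2,6,1,0,0,0⟩, ⟨10,1,6,14,2,0,0,0⟩, ⟨11,0,3,19,3,1,0,1⟩, ⟨12,1,2,6,1,0,0,0⟩]⟩,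
      ⟨6,9,13,false,0,4096,262144,[⟨7,0,3,11,2,0,1,1⟩, ⟨8,1,2,6,1,0,0,0⟩, ⟨10,1,6,14,2,0,0,0⟩, ⟨11,0,3,19,3,0,1,1⟩, ⟨12,1,2,6,1,0,0,0⟩]⟩]
  | _ => []


def dig (cs i : ℕ) : ℕ := cs / 4^i % 4

def completes (len cs col : ℕ) : Bool :=
  (recsAt len).any fun r => (cs / r.pu % 4 == col) && (cs / r.pv % 4 == col)

def dfs : ℕ → ℕ → ℕ → ℕ → ℕ → Bool
  | 0, _, _, _, _ => false
  | fuel+1, len, p4, cs, m =>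
    if 14 ≤ len then false
    else
      (completes len cs 0 || dfs fuel (len+1) (p4*4) (cs + 0*p4) (if 0 == m then m+1 else m)) &&
      (decide (m < 1) || completes len cs 1 ||
        dfs fuel (len+1) (p4*4) (cs + 1*p4) (if 1 == m then m+1 else m)) &&
      (decide (m < 2) || completes len cs 2 ||
        dfs fuel (len+1) (p4*4) (cs + 2*p4) (if 2 == m then m+1 else m)) &&
      (decide (m < 3) || completes len cs 3 ||
        dfs fuel (len+1) (p4*4) (cs + 3*p4) (if 3 == m then m+1 else m))

theorem dig_lt (cs i : ℕ) : dig cs i < 4 := Nat.mod_lt _ (by norm_num)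

theorem dig_low {cs col len i : ℕ} (h : i < len) :
    dig (cs + col*4^len) i = dig cs i := by
  unfold dig
  have hsplit : col*4^len = (col*4^(len-i))*4^i := by
    rw [mul_assoc, ← pow_add]
    congr 2
    omega
  rw [hsplit, Nat.add_mul_div_right _ _ (pow_pos (by norm_num) i)]
  have h4 : col*4^(len-i) = (col*4^(len-i-1))*4 := by
    rw [mul_assoc, ← pow_succ]
    congr 2
    omega
  rw [h4, Nat.add_mul_mod_self_right]

theorem dig_top {cs col len : ℕ} (hcs : cs < 4^len) (hcol : col < 4) :
    dig (cs + col*4^len) len = col := by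
  unfold dig
  rw [Nat.add_mul_div_right _ _ (pow_pos (by norm_num) len),
    Nat.div_eq_of_lt hcs, Nat.zero_add, Nat.mod_eq_of_lt hcol]

theorem dfs_sound
    (hwf : ∀ w, w < 14 → ∀ r ∈ recsAt w,
      (r.u < r.v ∧ r.v < r.w ∧ r.w = w) ∧ r.pu = 4^r.u ∧ r.pv = 4^r.v) :
    ∀ fuel len cs m, dfs fuel len (4^len) cs m = true → cs < 4^len →
    ∀ f : ℕ → ℕ, (∀ i, f i < 4) →
    (∀ i j, i < len → j < len → (dig cs i = dig cs j ↔ f i = f j)) →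
    (∀ i, i < len → dig cs i < m) →
    (∀ c, c < m → ∃ i, i < len ∧ dig cs i = c) →
    ∃ w, w < 14 ∧ ∃ r ∈ recsAt w, f r.u = f r.v ∧ f r.v = f r.w := by
  intro fuel
  induction fuel with
  | zero => intro len cs m h; simp [dfs] at h
  | succ fuel ih =>
      intro len cs m h hcs f hf4 inv1 inv2 inv3
      have hstep : dfs (fuel+1) len (4^len) cs m =
        (if 14 ≤ len then false
         else
          (completes len cs 0 || dfs fuel (len+1) (4^len*4) (cs + 0*4^len) (if 0 == m then m+1 else m)) &&
          (decide (m < 1) || completes len cs 1 ||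
            dfs fuel (len+1) (4^len*4) (cs + 1*4^len) (if 1 == m then m+1 else m)) &&
          (decide (m < 2) || completes len cs 2 ||
            dfs fuel (len+1) (4^len*4) (cs + 2*4^len) (if 2 == m then m+1 else m)) &&
          (decide (m < 3) || completes len cs 3 ||
            dfs fuel (len+1) (4^len*4) (cs + 3*4^len) (if 3 == m then m+1 else m))) := rfl
      rw [hstep] at h
      by_cases hlen : 14 ≤ len
      · rw [if_pos hlen] at h; exact absurd h (by simp)
      rw [if_neg hlen] at h
      push_neg at hlen
      obtain ⟨h3', h3⟩ := andE h
      obtain ⟨h2', h2⟩ := andE h3'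
      obtain ⟨h0, h1⟩ := andE h2'
      have key : ∀ col : ℕ, col ≤ m → col < 4 →
          (∀ i, i < len → (dig cs i = col ↔ f i = f len)) →
          (completes len cs col ||
            dfs fuel (len+1) (4^len*4) (cs + col*4^len) (if col == m then m+1 else m)) = true →
          ∃ w, w < 14 ∧ ∃ r ∈ recsAt w, f r.u = f r.v ∧ f r.v = f r.w := by
        intro col hcolm hcol4 hdigf hbr
        rcases orE hbr with hcomp | hrec
        · unfold completes at hcomp
          rw [List.any_eq_true] at hcomp
          obtain ⟨r, hrmem, hrc⟩ := hcomp
          obtain ⟨hru, hrv⟩ := andE hrc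
          obtain ⟨⟨huv, hvw, hw⟩, hpu, hpv⟩ := hwf len hlen r hrmem
          have hru' : dig cs r.u = col := by
            have := beqE hru
            rw [hpu] at this
            exact this
          have hrv' : dig cs r.v = col := by
            have := beqE hrv
            rw [hpv] at this
            exact this
          have hulen : r.u < len := by omega
          have hvlen : r.v < len := by omega
          refine ⟨len, hlen, r, hrmem, ?_, ?_⟩
          · rw [← (inv1 r.u r.v hulen hvlen)]
            rw [hru', hrv']
          · have hfv : f r.v = f len := (hdigf r.v hvlen).1 hrv'
            rw [hfv, hw]
        · set cs' := cs + col*4^len with hcs'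
          have hcs'lt : cs' < 4^(len+1) := by
            have h1' : col*4^len ≤ 3*4^len := Nat.mul_le_mul_right _ (by omega)
            have h2' : 4^(len+1) = 4*4^len := by rw [pow_succ]; ring
            omega
          have hd_low : ∀ i, i < len → dig cs' i = dig cs i := fun i hi => dig_low hi
          have hd_top : dig cs' len = col := dig_top hcs hcol4
          have hpow : 4^len*4 = 4^(len+1) := by rw [pow_succ]
          rw [hpow] at hrec
          apply ih (len+1) cs' (if col == m then m+1 else m) hrec hcs'lt f hf4
          · intro i j hi hj
            rcases Nat.lt_or_ge i len with hi' | hi' <;> rcases Nat.lt_or_ge j len with hj' | hj'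
            · rw [hd_low i hi', hd_low j hj']
              exact inv1 i j hi' hj'
            · have hj'' : j = len := by omega
              subst hj''
              rw [hd_low i hi', hd_top]
              exact hdigf i hi'
            · have hi'' : i = len := by omega
              subst hi''
              rw [hd_low j hj', hd_top]
              constructor
              · intro he
                exact ((hdigf j hj').1 he.symm).symm
              · intro he
                exact ((hdigf j hj').2 he.symm).symm
            · have hi'' : i = len := by omega
              have hj'' : j = len := by omega
              subst hi''; subst hj''
              simp
          · intro i hi
            rcases Nat.lt_or_ge i len with hi' | hi'
            · rw [hd_low i hi']
              have := inv2 i hi'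
              by_cases hcm2 : col = m
              · rw [if_pos (by simpa using hcm2)]
                omega
              · rw [if_neg (by simpa using hcm2)]
                omega
            · have hi'' : i = len := by omega
              subst hi''
              rw [hd_top]
              by_cases hcm2 : col = m
              · rw [if_pos (by simpa using hcm2)]
                omega
              · rw [if_neg (by simpa using hcm2)]
                omega
          · intro c hc
            rcases Nat.lt_or_ge c m with hcm | hcm
            · obtain ⟨i, hi, hdi⟩ := inv3 c hcm
              exact ⟨i, by omega, by rw [hd_low i hi]; exact hdi⟩
            · by_cases hcm2 : col = m
              · rw [if_pos (by simpa using hcm2)] at hc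
                have hce : c = m := by omega
                refine ⟨len, by omega, ?_⟩
                rw [hd_top, hcm2, hce]
              · rw [if_neg (by simpa using hcm2)] at hc
                omega
      by_cases hseen : ∃ j, j < len ∧ f j = f len
      · obtain ⟨j, hj, hfj⟩ := hseen
        have hcolm : dig cs j < m := inv2 j hj
        have hcol4 : dig cs j < 4 := dig_lt cs j
        have hdigf : ∀ i, i < len → (dig cs i = dig cs j ↔ f i = f len) := by
          intro i hi
          rw [inv1 i j hi hj, hfj]
        have hbr : (completes len cs (dig cs j) ||
            dfs fuel (len+1) (4^len*4) (cs + (dig cs j)*4^len)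
              (if dig cs j == m then m+1 else m)) = true := by
          have hd0 : dig cs j = 0 ∨ dig cs j = 1 ∨ dig cs j = 2 ∨ dig cs j = 3 := by omega
          rcases hd0 with he | he | he | he <;> rw [he]
          · exact h0
          · have hm' : (decide (m < 1) : Bool) = false := by
              simp only [decide_eq_false_iff_not]
              omega
            rw [hm'] at h1
            simpa using h1
          · have hm' : (decide (m < 2) : Bool) = false := by
              simp only [decide_eq_false_iff_not]
              omega
            rw [hm'] at h2
            simpa using h2
          · have hm' : (decide (m < 3) : Bool) = false := by
              simp only [decide_eq_false_iff_not]
              omega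
            rw [hm'] at h3
            simpa using h3
        exact key (dig cs j) (by omega) hcol4 hdigf hbr
      · push_neg at hseen
        have hm3 : m ≤ 3 := by
          by_contra hcon
          push_neg at hcon
          obtain ⟨i0, hi0, hd0⟩ := inv3 0 (by omega)
          obtain ⟨i1, hi1, hd1⟩ := inv3 1 (by omega)
          obtain ⟨i2, hi2, hd2⟩ := inv3 2 (by omega)
          obtain ⟨i3, hi3, hd3⟩ := inv3 3 (by omega)
          have hne : ∀ a b : ℕ, a < len → b < len → dig cs a ≠ dig cs b → f a ≠ f b := by
            intro a b ha hb hd he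
            exact hd ((inv1 a b ha hb).2 he)
          have hne01 : f i0 ≠ f i1 := hne _ _ hi0 hi1 (by omega)
          have hne02 : f i0 ≠ f i2 := hne _ _ hi0 hi2 (by omega)
          have hne03 : f i0 ≠ f i3 := hne _ _ hi0 hi3 (by omega)
          have hne12 : f i1 ≠ f i2 := hne _ _ hi1 hi2 (by omega)
          have hne13 : f i1 ≠ f i3 := hne _ _ hi1 hi3 (by omega)
          have hne23 : f i2 ≠ f i3 := hne _ _ hi2 hi3 (by omega)
          have h0' := hf4 i0
          have h1' := hf4 i1
          have h2' := hf4 i2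
          have h3' := hf4 i3
          have hl' := hf4 len
          have : f len = f i0 ∨ f len = f i1 ∨ f len = f i2 ∨ f len = f i3 := by omega
          rcases this with he | he | he | he
          · exact hseen i0 hi0 he.symm
          · exact hseen i1 hi1 he.symm
          · exact hseen i2 hi2 he.symm
          · exact hseen i3 hi3 he.symm
        have hdigf : ∀ i, i < len → (dig cs i = m ↔ f i = f len) := by
          intro i hi
          constructor
          · intro he
            exact absurd he (by have := inv2 i hi; omega)
          · intro he
            exact absurd he (hseen i hi)
        have hbr : (completes len cs m ||
            dfs fuel (len+1) (4^len*4) (cs + m*4^len) (if m == m then m+1 else m)) = true := by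
          have hd0 : m = 0 ∨ m = 1 ∨ m = 2 ∨ m = 3 := by omega
          rcases hd0 with he | he | he | he <;> subst he
          · exact h0
          · simpa using h1
          · simpa using h2
          · simpa using h3
        exact key m (le_refl m) (by omega) hdigf hbr

set_option maxRecDepth 100000 in
set_option maxHeartbeats 4000000 in
theorem dfs_true : dfs 15 0 1 0 0 = true := by decide


-- ===================== checker layer =====================

def pt (l : List (ℝ×ℝ)) (i : ℕ) : ℝ×ℝ := l.getD i (0,0)

theorem pt_eq {l : List (ℝ×ℝ)} {i : ℕ} (h : i < l.length) : pt l i = l[i] :=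
  List.getD_eq_getElem l (0,0) h

theorem pt_mem {l : List (ℝ×ℝ)} {i : ℕ} (h : i < l.length) : pt l i ∈ l := by
  rw [pt_eq h]; exact List.getElem_mem h

def sideOK (x p1 p2 k σ : ℕ) : Bool :=
  decide (x < 26) && decide (p1 < 26) && decide (p2 < 26) && decide (p1 < p2) &&
  decide (x % 2^k = p1 % 2^k) && decide (x % 2^k = p2 % 2^k) &&
  decide (p1 / 2^k % 2 = p2 / 2^k % 2) && decide (x / 2^k % 2 = σ) &&
  decide (σ ≠ p1 / 2^k % 2)

/-- side guarantee: σ = 1 gives strictly above as cross positivity -/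
theorem sideOK_above {l : List (ℝ×ℝ)} (hH : IsHorton l) (hlen : 26 ≤ l.length)
    {x p1 p2 k : ℕ} (h : sideOK x p1 p2 k 1 = true) :
    0 < cross (pt l p1) (pt l p2) (pt l x) := by
  simp only [sideOK, Bool.and_eq_true, decide_eq_true_eq] at h
  obtain ⟨⟨⟨⟨⟨⟨⟨⟨hx, hp1⟩, hp2⟩, hlt⟩, m1⟩, m2⟩, mp⟩, mx⟩, mne⟩ := h
  have hx' : x < l.length := by omega
  have h1' : p1 < l.length := by omega
  have h2' : p2 < l.length := by omega
  have := (side_lemma k l hH x p1 p2 hx' h1' h2' m1 m2 mp (by omega) (by omega)).1 mx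
  rw [← pt_eq hx', ← pt_eq h1', ← pt_eq h2'] at this
  have hxlt : (pt l p1).1 < (pt l p2).1 := by
    rw [pt_eq h1', pt_eq h2']; exact sorted_fst_lt (hortonSortedX hH) h2' hlt
  exact (above_iff hxlt).1 this

theorem sideOK_below {l : List (ℝ×ℝ)} (hH : IsHorton l) (hlen : 26 ≤ l.length)
    {x p1 p2 k : ℕ} (h : sideOK x p1 p2 k 0 = true) :
    cross (pt l p1) (pt l p2) (pt l x) < 0 := by
  simp only [sideOK, Bool.and_eq_true, decide_eq_true_eq] at h
  obtain ⟨⟨⟨⟨⟨⟨⟨⟨hx, hp1⟩, hp2⟩, hlt⟩, m1⟩, m2⟩, mp⟩, mx⟩, mne⟩ := h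
  have hx' : x < l.length := by omega
  have h1' : p1 < l.length := by omega
  have h2' : p2 < l.length := by omega
  have := (side_lemma k l hH x p1 p2 hx' h1' h2' m1 m2 mp (by omega) (by omega)).2 mx
  rw [← pt_eq hx', ← pt_eq h1', ← pt_eq h2'] at this
  have hxlt : (pt l p1).1 < (pt l p2).1 := by
    rw [pt_eq h1', pt_eq h2']; exact sorted_fst_lt (hortonSortedX hH) h2' hlt
  exact (below_iff hxlt).1 this

/-- weak side for a vertex: endpoint of the line or strict side σ -/
def vsideOK (t p1 p2 k σ : ℕ) : Bool :=
  (t == p1) || (t == p2) || sideOK t p1 p2 k σ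

theorem vsideOK_le {l : List (ℝ×ℝ)} (hH : IsHorton l) (hlen : 26 ≤ l.length)
    {t p1 p2 k : ℕ} (h : vsideOK t p1 p2 k 0 = true) :
    cross (pt l p1) (pt l p2) (pt l t) ≤ 0 := by
  by_cases h1 : t = p1
  · subst h1; rw [cross_self_left]
  · by_cases h2 : t = p2
    · subst h2; rw [cross_self_right]
    · have hs : sideOK t p1 p2 k 0 = true := by
        unfold vsideOK at h
        simpa [h1, h2] using h
      exact le_of_lt (sideOK_below hH hlen hs)

theorem vsideOK_ge {l : List (ℝ×ℝ)} (hH : IsHorton l) (hlen : 26 ≤ l.length)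
    {t p1 p2 k : ℕ} (h : vsideOK t p1 p2 k 1 = true) :
    0 ≤ cross (pt l p1) (pt l p2) (pt l t) := by
  by_cases h1 : t = p1
  · subst h1; rw [cross_self_left]
  · by_cases h2 : t = p2
    · subst h2; rw [cross_self_right]
    · have hs : sideOK t p1 p2 k 1 = true := by
        unfold vsideOK at h
        simpa [h1, h2] using h
      exact le_of_lt (sideOK_above hH hlen hs)

def certOK (u v w : ℕ) (c : Cert) : Bool :=
  if c.rule == 0 then
    sideOK c.q c.p1 c.p2 c.kq 1 && vsideOK u c.p1 c.p2 c.ka 0 &&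
      vsideOK v c.p1 c.p2 c.kb 0 && vsideOK w c.p1 c.p2 c.kc 0
  else if c.rule == 1 then
    sideOK c.q c.p1 c.p2 c.kq 0 && vsideOK u c.p1 c.p2 c.ka 1 &&
      vsideOK v c.p1 c.p2 c.kb 1 && vsideOK w c.p1 c.p2 c.kc 1
  else if c.rule == 2 then
    (c.p1 == c.q || c.p2 == c.q) && sideOK u c.p1 c.p2 c.ka 1 &&
      sideOK v c.p1 c.p2 c.kb 1 && sideOK w c.p1 c.p2 c.kc 1
  else if c.rule == 3 then
    (c.p1 == c.q || c.p2 == c.q) && sideOK u c.p1 c.p2 c.ka 0 &&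
      sideOK v c.p1 c.p2 c.kb 0 && sideOK w c.p1 c.p2 c.kc 0
  else if c.rule == 4 then
    sideOK c.q u v c.ka 1 && sideOK c.q u w c.kb 1 && sideOK c.q v w c.kc 1
  else if c.rule == 5 then
    sideOK c.q u v c.ka 0 && sideOK c.q u w c.kb 0 && sideOK c.q v w c.kc 0
  else if c.rule == 6 then
    if c.kq == 0 then
      ((c.p1 == c.q && c.p2 == u) || (c.p2 == c.q && c.p1 == u)) &&
        sideOK v c.p1 c.p2 c.kb 1 && sideOK w c.p1 c.p2 c.kc 1
    else if c.kq == 1 then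
      ((c.p1 == c.q && c.p2 == v) || (c.p2 == c.q && c.p1 == v)) &&
        sideOK u c.p1 c.p2 c.ka 1 && sideOK w c.p1 c.p2 c.kc 1
    else if c.kq == 2 then
      ((c.p1 == c.q && c.p2 == w) || (c.p2 == c.q && c.p1 == w)) &&
        sideOK u c.p1 c.p2 c.ka 1 && sideOK v c.p1 c.p2 c.kb 1
    else false
  else if c.rule == 7 then
    if c.kq == 0 then
      ((c.p1 == c.q && c.p2 == u) || (c.p2 == c.q && c.p1 == u)) &&
        sideOK v c.p1 c.p2 c.kb 0 && sideOK w c.p1 c.p2 c.kc 0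
    else if c.kq == 1 then
      ((c.p1 == c.q && c.p2 == v) || (c.p2 == c.q && c.p1 == v)) &&
        sideOK u c.p1 c.p2 c.ka 0 && sideOK w c.p1 c.p2 c.kc 0
    else if c.kq == 2 then
      ((c.p1 == c.q && c.p2 == w) || (c.p2 == c.q && c.p1 == w)) &&
        sideOK u c.p1 c.p2 c.ka 0 && sideOK v c.p1 c.p2 c.kb 0
    else false
  else false


theorem sideOK_bounds {x p1 p2 k σ : ℕ} (h : sideOK x p1 p2 k σ = true) :
    x < 26 ∧ p1 < 26 ∧ p2 < 26 ∧ p1 < p2 ∧ x ≠ p1 ∧ x ≠ p2 := by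
  simp only [sideOK, Bool.and_eq_true, decide_eq_true_eq] at h
  obtain ⟨⟨⟨⟨⟨⟨⟨⟨hx, hp1⟩, hp2⟩, hlt⟩, m1⟩, m2⟩, mp⟩, mx⟩, mne⟩ := h
  refine ⟨hx, hp1, hp2, hlt, ?_, ?_⟩
  · intro he; subst he; omega
  · intro he; subst he; omega

/-- q on the line through p1,p2 (as an endpoint): cross vanishes -/
theorem cross_endpoint {l : List (ℝ×ℝ)} {q p1 p2 : ℕ} (h : p1 = q ∨ p2 = q) :
    cross (pt l p1) (pt l p2) (pt l q) = 0 := by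
  rcases h with h | h
  · subst h; exact cross_self_left _ _
  · subst h; exact cross_self_right _ _

theorem cert_excl {l : List (ℝ×ℝ)} (hH : IsHorton l) (hlen : 26 ≤ l.length)
    {u v w : ℕ} (hu : u < v) (hv : v < w) (hw : w < 26)
    (c : Cert) (hc : certOK u v w c = true)
    (hqu : u < c.q) (hqw : c.q < w) (hqv : c.q ≠ v) :
    pt l c.q ∉ convexHull ℝ ({pt l u, pt l v, pt l w} : Set (ℝ×ℝ)) := by
  have hsx := hortonSortedX hH
  unfold certOK at hc
  by_cases r0 : c.rule = 0
  · simp only [r0, beq_self_eq_true, if_true, Bool.and_eq_true] at hc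
    obtain ⟨⟨⟨hq, h1⟩, h2⟩, h3⟩ := hc
    exact excl_le (vsideOK_le hH hlen h1) (vsideOK_le hH hlen h2) (vsideOK_le hH hlen h3)
      (sideOK_above hH hlen hq)
  · rw [if_neg (by simpa using r0)] at hc
    by_cases r1 : c.rule = 1
    · simp only [r1, beq_self_eq_true, if_true, Bool.and_eq_true] at hc
      obtain ⟨⟨⟨hq, h1⟩, h2⟩, h3⟩ := hc
      have g1 : cross (pt l c.p2) (pt l c.p1) (pt l u) ≤ 0 := by
        rw [cross_swap]; linarith [vsideOK_ge hH hlen h1]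
      have g2 : cross (pt l c.p2) (pt l c.p1) (pt l v) ≤ 0 := by
        rw [cross_swap]; linarith [vsideOK_ge hH hlen h2]
      have g3 : cross (pt l c.p2) (pt l c.p1) (pt l w) ≤ 0 := by
        rw [cross_swap]; linarith [vsideOK_ge hH hlen h3]
      have gq : 0 < cross (pt l c.p2) (pt l c.p1) (pt l c.q) := by
        rw [cross_swap]; linarith [sideOK_below hH hlen hq]
      exact excl_le g1 g2 g3 gq
    · rw [if_neg (by simpa using r1)] at hc
      by_cases r2 : c.rule = 2
      · simp only [r2, beq_self_eq_true, if_true, Bool.and_eq_true] at hc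
        obtain ⟨⟨⟨hq, h1⟩, h2⟩, h3⟩ := hc
        have hend : c.p1 = c.q ∨ c.p2 = c.q := by
          rcases orE hq with h | h
          · exact Or.inl (beqE h)
          · exact Or.inr (beqE h)
        exact excl_zero (sideOK_above hH hlen h1) (sideOK_above hH hlen h2)
          (sideOK_above hH hlen h3) (cross_endpoint hend)
      · rw [if_neg (by simpa using r2)] at hc
        by_cases r3 : c.rule = 3
        · simp only [r3, beq_self_eq_true, if_true, Bool.and_eq_true] at hc
          obtain ⟨⟨⟨hq, h1⟩, h2⟩, h3⟩ := hc
          have hend : c.p1 = c.q ∨ c.p2 = c.q := by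
            rcases orE hq with h | h
            · exact Or.inl (beqE h)
            · exact Or.inr (beqE h)
          have hz : cross (pt l c.p2) (pt l c.p1) (pt l c.q) = 0 := by
            rw [cross_swap, cross_endpoint hend]; ring
          refine excl_zero ?_ ?_ ?_ hz
          · rw [cross_swap]; linarith [sideOK_below hH hlen h1]
          · rw [cross_swap]; linarith [sideOK_below hH hlen h2]
          · rw [cross_swap]; linarith [sideOK_below hH hlen h3]
        · rw [if_neg (by simpa using r3)] at hc
          by_cases r4 : c.rule = 4
          · simp only [r4, beq_self_eq_true, if_true, Bool.and_eq_true] at hc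
            obtain ⟨⟨h1, h2⟩, h3⟩ := hc
            rcases le_or_gt (cross (pt l u) (pt l w) (pt l v)) 0 with hD | hD
            · exact excl_le (le_of_eq (cross_self_left _ _)) hD
                (le_of_eq (cross_self_right _ _)) (sideOK_above hH hlen h2)
            · have hD' : cross (pt l u) (pt l v) (pt l w) < 0 := by
                rw [cross_rot]; linarith
              exact excl_le (le_of_eq (cross_self_left _ _))
                (le_of_eq (cross_self_right _ _)) (le_of_lt hD')
                (sideOK_above hH hlen h1)
          · rw [if_neg (by simpa using r4)] at hc
            by_cases r5 : c.rule = 5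
            · simp only [r5, beq_self_eq_true, if_true, Bool.and_eq_true] at hc
              obtain ⟨⟨h1, h2⟩, h3⟩ := hc
              rcases le_or_gt 0 (cross (pt l u) (pt l w) (pt l v)) with hD | hD
              · have g1 : cross (pt l w) (pt l u) (pt l u) ≤ 0 :=
                  le_of_eq (cross_self_right _ _)
                have g2 : cross (pt l w) (pt l u) (pt l v) ≤ 0 := by
                  rw [cross_swap]; linarith
                have g3 : cross (pt l w) (pt l u) (pt l w) ≤ 0 :=
                  le_of_eq (cross_self_left _ _)
                have gq : 0 < cross (pt l w) (pt l u) (pt l c.q) := by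
                  rw [cross_swap]; linarith [sideOK_below hH hlen h2]
                exact excl_le g1 g2 g3 gq
              · have hD' : 0 < cross (pt l u) (pt l v) (pt l w) := by
                  rw [cross_rot]; linarith
                have g1 : cross (pt l v) (pt l u) (pt l u) ≤ 0 :=
                  le_of_eq (cross_self_right _ _)
                have g2 : cross (pt l v) (pt l u) (pt l v) ≤ 0 :=
                  le_of_eq (cross_self_left _ _)
                have g3 : cross (pt l v) (pt l u) (pt l w) ≤ 0 := by
                  rw [cross_swap]; linarith
                have gq : 0 < cross (pt l v) (pt l u) (pt l c.q) := by
                  rw [cross_swap]; linarith [sideOK_below hH hlen h1]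
                exact excl_le g1 g2 g3 gq
            · rw [if_neg (by simpa using r5)] at hc
              by_cases r6 : c.rule = 6
              · simp only [r6, beq_self_eq_true, if_true] at hc
                by_cases k0 : c.kq = 0
                · simp only [k0, beq_self_eq_true, if_true, Bool.and_eq_true] at hc
                  obtain ⟨⟨hend, h2⟩, h3⟩ := hc
                  have hqz : cross (pt l c.p1) (pt l c.p2) (pt l c.q) = 0 := by
                    apply cross_endpoint
                    rcases orE hend with h | h
                    · exact Or.inl (beqE (andE h).1)
                    · exact Or.inr (beqE (andE h).1)
                  have huz : cross (pt l c.p1) (pt l c.p2) (pt l u) = 0 := by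
                    apply cross_endpoint
                    rcases orE hend with h | h
                    · exact Or.inr (beqE (andE h).2)
                    · exact Or.inl (beqE (andE h).2)
                  have hqune : c.q ≠ u := by omega
                  have hb := sideOK_bounds h2
                  have hqlt : c.q < 26 := by omega
                  have hne : pt l c.q ≠ pt l u := by
                    rw [pt_eq (by omega : c.q < l.length), pt_eq (by omega : u < l.length)]
                    exact sorted_ne hsx (by omega) (by omega) hqune
                  rw [set3_rot]
                  exact excl_comb (sideOK_above hH hlen h2) (sideOK_above hH hlen h3)
                    huz hqz hne
                · rw [if_neg (by simpa using k0)] at hc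
                  by_cases k1 : c.kq = 1
                  · simp only [k1, beq_self_eq_true, if_true, Bool.and_eq_true] at hc
                    obtain ⟨⟨hend, h1⟩, h3⟩ := hc
                    have hqz : cross (pt l c.p1) (pt l c.p2) (pt l c.q) = 0 := by
                      apply cross_endpoint
                      rcases orE hend with h | h
                      · exact Or.inl (beqE (andE h).1)
                      · exact Or.inr (beqE (andE h).1)
                    have hvz : cross (pt l c.p1) (pt l c.p2) (pt l v) = 0 := by
                      apply cross_endpoint
                      rcases orE hend with h | h
                      · exact Or.inr (beqE (andE h).2)
                      · exact Or.inl (beqE (andE h).2)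
                    have hb := sideOK_bounds h1
                    have hne : pt l c.q ≠ pt l v := by
                      rw [pt_eq (by omega : c.q < l.length), pt_eq (by omega : v < l.length)]
                      exact sorted_ne hsx (by omega) (by omega) hqv
                    rw [set3_swap23]
                    exact excl_comb (sideOK_above hH hlen h1) (sideOK_above hH hlen h3)
                      hvz hqz hne
                  · rw [if_neg (by simpa using k1)] at hc
                    by_cases k2 : c.kq = 2
                    · simp only [k2, beq_self_eq_true, if_true, Bool.and_eq_true] at hc
                      obtain ⟨⟨hend, h1⟩, h2⟩ := hc
                      have hqz : cross (pt l c.p1) (pt l c.p2) (pt l c.q) = 0 := by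
                        apply cross_endpoint
                        rcases orE hend with h | h
                        · exact Or.inl (beqE (andE h).1)
                        · exact Or.inr (beqE (andE h).1)
                      have hwz : cross (pt l c.p1) (pt l c.p2) (pt l w) = 0 := by
                        apply cross_endpoint
                        rcases orE hend with h | h
                        · exact Or.inr (beqE (andE h).2)
                        · exact Or.inl (beqE (andE h).2)
                      have hqwne : c.q ≠ w := by omega
                      have hb := sideOK_bounds h1
                      have hne : pt l c.q ≠ pt l w := by
                        rw [pt_eq (by omega : c.q < l.length), pt_eq (by omega : w < l.length)]
                        exact sorted_ne hsx (by omega) (by omega) hqwne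
                      exact excl_comb (sideOK_above hH hlen h1) (sideOK_above hH hlen h2)
                        hwz hqz hne
                    · rw [if_neg (by simpa using k2)] at hc
                      exact absurd hc (by simp)
              · rw [if_neg (by simpa using r6)] at hc
                by_cases r7 : c.rule = 7
                · simp only [r7, beq_self_eq_true, if_true] at hc
                  by_cases k0 : c.kq = 0
                  · simp only [k0, beq_self_eq_true, if_true, Bool.and_eq_true] at hc
                    obtain ⟨⟨hend, h2⟩, h3⟩ := hc
                    have hqz : cross (pt l c.p2) (pt l c.p1) (pt l c.q) = 0 := by
                      rw [cross_swap]
                      have : cross (pt l c.p1) (pt l c.p2) (pt l c.q) = 0 := by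
                        apply cross_endpoint
                        rcases orE hend with h | h
                        · exact Or.inl (beqE (andE h).1)
                        · exact Or.inr (beqE (andE h).1)
                      rw [this]; ring
                    have huz : cross (pt l c.p2) (pt l c.p1) (pt l u) = 0 := by
                      rw [cross_swap]
                      have : cross (pt l c.p1) (pt l c.p2) (pt l u) = 0 := by
                        apply cross_endpoint
                        rcases orE hend with h | h
                        · exact Or.inr (beqE (andE h).2)
                        · exact Or.inl (beqE (andE h).2)
                      rw [this]; ring
                    have hqune : c.q ≠ u := by omega
                    have hb := sideOK_bounds h2
                    have hne : pt l c.q ≠ pt l u := by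
                      rw [pt_eq (by omega : c.q < l.length), pt_eq (by omega : u < l.length)]
                      exact sorted_ne hsx (by omega) (by omega) hqune
                    rw [set3_rot]
                    refine excl_comb ?_ ?_ huz hqz hne
                    · rw [cross_swap]; linarith [sideOK_below hH hlen h2]
                    · rw [cross_swap]; linarith [sideOK_below hH hlen h3]
                  · rw [if_neg (by simpa using k0)] at hc
                    by_cases k1 : c.kq = 1
                    · simp only [k1, beq_self_eq_true, if_true, Bool.and_eq_true] at hc
                      obtain ⟨⟨hend, h1⟩, h3⟩ := hc
                      have hqz : cross (pt l c.p2) (pt l c.p1) (pt l c.q) = 0 := by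
                        rw [cross_swap]
                        have : cross (pt l c.p1) (pt l c.p2) (pt l c.q) = 0 := by
                          apply cross_endpoint
                          rcases orE hend with h | h
                          · exact Or.inl (beqE (andE h).1)
                          · exact Or.inr (beqE (andE h).1)
                        rw [this]; ring
                      have hvz : cross (pt l c.p2) (pt l c.p1) (pt l v) = 0 := by
                        rw [cross_swap]
                        have : cross (pt l c.p1) (pt l c.p2) (pt l v) = 0 := by
                          apply cross_endpoint
                          rcases orE hend with h | h
                          · exact Or.inr (beqE (andE h).2)
                          · exact Or.inl (beqE (andE h).2)
                        rw [this]; ring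
                      have hb := sideOK_bounds h1
                      have hne : pt l c.q ≠ pt l v := by
                        rw [pt_eq (by omega : c.q < l.length), pt_eq (by omega : v < l.length)]
                        exact sorted_ne hsx (by omega) (by omega) hqv
                      rw [set3_swap23]
                      refine excl_comb ?_ ?_ hvz hqz hne
                      · rw [cross_swap]; linarith [sideOK_below hH hlen h1]
                      · rw [cross_swap]; linarith [sideOK_below hH hlen h3]
                    · rw [if_neg (by simpa using k1)] at hc
                      by_cases k2 : c.kq = 2
                      · simp only [k2, beq_self_eq_true, if_true, Bool.and_eq_true] at hc
                        obtain ⟨⟨hend, h1⟩, h2⟩ := hc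
                        have hqz : cross (pt l c.p2) (pt l c.p1) (pt l c.q) = 0 := by
                          rw [cross_swap]
                          have : cross (pt l c.p1) (pt l c.p2) (pt l c.q) = 0 := by
                            apply cross_endpoint
                            rcases orE hend with h | h
                            · exact Or.inl (beqE (andE h).1)
                            · exact Or.inr (beqE (andE h).1)
                          rw [this]; ring
                        have hwz : cross (pt l c.p2) (pt l c.p1) (pt l w) = 0 := by
                          rw [cross_swap]
                          have : cross (pt l c.p1) (pt l c.p2) (pt l w) = 0 := by
                            apply cross_endpoint
                            rcases orE hend with h | h
                            · exact Or.inr (beqE (andE h).2)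
                            · exact Or.inl (beqE (andE h).2)
                          rw [this]; ring
                        have hqwne : c.q ≠ w := by omega
                        have hb := sideOK_bounds h1
                        have hne : pt l c.q ≠ pt l w := by
                          rw [pt_eq (by omega : c.q < l.length), pt_eq (by omega : w < l.length)]
                          exact sorted_ne hsx (by omega) (by omega) hqwne
                        refine excl_comb ?_ ?_ hwz hqz hne
                        · rw [cross_swap]; linarith [sideOK_below hH hlen h1]
                        · rw [cross_swap]; linarith [sideOK_below hH hlen h2]
                      · rw [if_neg (by simpa using k2)] at hc
                        exact absurd hc (by simp)
                · rw [if_neg (by simpa using r7)] at hc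
                  exact absurd hc (by simp)

theorem collinear_of_cross_zero {a b c : ℝ×ℝ} (hab : a.1 ≠ b.1) (h : cross a b c = 0) :
    Collinear ℝ ({a,b,c} : Set (ℝ×ℝ)) := by
  rw [collinear_iff_of_mem (show a ∈ ({a,b,c} : Set (ℝ×ℝ)) by simp)]
  refine ⟨b - a, ?_⟩
  intro p hp
  have hd : b.1 - a.1 ≠ 0 := fun hc => hab (by linarith)
  rcases hp with hp | hp | hp
  · exact ⟨0, by simp [hp]⟩
  · refine ⟨1, ?_⟩
    rw [hp]
    show b = (1:ℝ) • (b - a) + a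
    simp
  · refine ⟨(c.1-a.1)/(b.1-a.1), ?_⟩
    rw [hp]
    show c = ((c.1-a.1)/(b.1-a.1)) • (b - a) + a
    have h1 : c.1 = ((c.1-a.1)/(b.1-a.1)) * (b.1 - a.1) + a.1 := by
      field_simp
      ring
    have h2 : c.2 = ((c.1-a.1)/(b.1-a.1)) * (b.2 - a.2) + a.2 := by
      unfold cross at h
      field_simp
      nlinarith [h]
    apply Prod.ext_iff.2
    constructor
    · simpa using h1
    · simpa using h2

theorem cross_ne_of_noncollinear {a b c : ℝ×ℝ} (hab : a.1 ≠ b.1)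
    (h : ¬ Collinear ℝ ({a,b,c} : Set (ℝ×ℝ))) : cross a b c ≠ 0 :=
  fun hc => h (collinear_of_cross_zero hab hc)

theorem cross_fst (p : ℝ×ℝ) : cross ((0:ℝ),(0:ℝ)) ((0:ℝ),(-1:ℝ)) p = p.1 := by
  simp [cross]

theorem cross_fst_neg (p : ℝ×ℝ) : cross ((0:ℝ),(0:ℝ)) ((0:ℝ),(1:ℝ)) p = -p.1 := by
  simp [cross]

theorem interior_fst_lt {u v w p : ℝ×ℝ} (h1 : u.1 ≤ w.1) (h2 : v.1 ≤ w.1)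
    (hp : p ∈ interior (convexHull ℝ ({u,v,w} : Set (ℝ×ℝ)))) : p.1 < w.1 := by
  have := interior_cross_lt (a := ((0:ℝ),(0:ℝ))) (b := ((0:ℝ),(-1:ℝ)))
    (c := w.1) (by simp [Prod.ext_iff]) (by rw [cross_fst]; exact h1)
    (by rw [cross_fst]; exact h2) (by rw [cross_fst]) hp
  rwa [cross_fst] at this

theorem interior_fst_gt {u v w p : ℝ×ℝ} (h1 : u.1 ≤ v.1) (h2 : u.1 ≤ w.1)
    (hp : p ∈ interior (convexHull ℝ ({u,v,w} : Set (ℝ×ℝ)))) : u.1 < p.1 := by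
  have := interior_cross_lt (a := ((0:ℝ),(0:ℝ))) (b := ((0:ℝ),(1:ℝ)))
    (c := -u.1) (by simp [Prod.ext_iff]) (by rw [cross_fst_neg])
    (by rw [cross_fst_neg]; linarith) (by rw [cross_fst_neg]; linarith) hp
  rw [cross_fst_neg] at this
  linarith

theorem mid_not_interior {l : List (ℝ×ℝ)} (hH : IsHorton l)
    (hgp : GenPos {p : ℝ×ℝ | p ∈ l}) {u v w : ℕ} (hu : u < v) (hv : v < w)
    (hw : w < l.length) :
    pt l v ∉ interior (convexHull ℝ ({pt l u, pt l v, pt l w} : Set (ℝ×ℝ))) := by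
  have hsx := hortonSortedX hH
  have hul : u < l.length := by omega
  have hvl : v < l.length := by omega
  have hx1 : (pt l u).1 < (pt l v).1 := by
    rw [pt_eq hul, pt_eq hvl]; exact sorted_fst_lt hsx hvl hu
  have hx2 : (pt l v).1 < (pt l w).1 := by
    rw [pt_eq hvl, pt_eq hw]; exact sorted_fst_lt hsx hw hv
  have hx3 : (pt l u).1 < (pt l w).1 := by linarith
  have hncol : ¬ Collinear ℝ ({pt l u, pt l w, pt l v} : Set (ℝ×ℝ)) := by
    apply hgp
    · exact pt_mem hul
    · exact pt_mem hw
    · exact pt_mem hvl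
    · rw [pt_eq hul, pt_eq hw]; exact sorted_ne hsx hul hw (by omega)
    · rw [pt_eq hul, pt_eq hvl]; exact sorted_ne hsx hul hvl (by omega)
    · rw [pt_eq hw, pt_eq hvl]; exact sorted_ne hsx hw hvl (by omega)
  have hcne : cross (pt l u) (pt l w) (pt l v) ≠ 0 :=
    cross_ne_of_noncollinear (ne_of_lt hx3) hncol
  intro hmem
  rcases lt_or_gt_of_ne hcne with hneg | hpos
  · have hne' : pt l w ≠ pt l u := fun he => absurd (congrArg Prod.fst he) (ne_of_gt hx3)
    have g1 : cross (pt l w) (pt l u) (pt l u) ≤ - cross (pt l u) (pt l w) (pt l v) := by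
      rw [cross_self_right]; linarith
    have g2 : cross (pt l w) (pt l u) (pt l v) ≤ - cross (pt l u) (pt l w) (pt l v) := by
      rw [cross_swap]
    have g3 : cross (pt l w) (pt l u) (pt l w) ≤ - cross (pt l u) (pt l w) (pt l v) := by
      rw [cross_self_left]; linarith
    have := interior_cross_lt hne' g1 g2 g3 hmem
    rw [cross_swap] at this
    linarith
  · have hne' : pt l u ≠ pt l w := fun he => absurd (congrArg Prod.fst he) (ne_of_lt hx3)
    have g1 : cross (pt l u) (pt l w) (pt l u) ≤ cross (pt l u) (pt l w) (pt l v) := by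
      rw [cross_self_left]; linarith
    have g2 : cross (pt l u) (pt l w) (pt l v) ≤ cross (pt l u) (pt l w) (pt l v) := le_refl _
    have g3 : cross (pt l u) (pt l w) (pt l w) ≤ cross (pt l u) (pt l w) (pt l v) := by
      rw [cross_self_right]; linarith
    have := interior_cross_lt hne' g1 g2 g3 hmem
    linarith

def recOK (r : Rec3) : Bool :=
  decide (r.u < r.v) && decide (r.v < r.w) && decide (r.w < 14) &&
  ((List.range' (r.u+1) (r.w - r.u - 1)).all fun q =>
     (q == r.v) || (r.hasSurv && (q == r.surv)) ||
     (r.certs.any fun c => (c.q == q) && certOK r.u r.v r.w c))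

theorem record_triPts {l : List (ℝ×ℝ)} (hH : IsHorton l)
    (hgp : GenPos {p : ℝ×ℝ | p ∈ l}) (hlen : 26 ≤ l.length)
    (r : Rec3) (h : recOK r = true) :
    triPts l.toFinset (pt l r.u) (pt l r.v) (pt l r.w) ≤ 1 := by
  have hsx := hortonSortedX hH
  unfold recOK at h
  obtain ⟨h', hall⟩ := andE h
  obtain ⟨h'', hw14⟩ := andE h'
  obtain ⟨huv, hvw⟩ := andE h''
  rw [decide_eq_true_eq] at hw14
  rw [decide_eq_true_eq] at huv
  rw [decide_eq_true_eq] at hvw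
  have hul : r.u < l.length := by omega
  have hvl : r.v < l.length := by omega
  have hwl : r.w < l.length := by omega
  have hsub : l.toFinset.filter
      (fun p => p ∈ interior (convexHull ℝ
        ({pt l r.u, pt l r.v, pt l r.w} : Set (ℝ×ℝ)))) ⊆ {pt l r.surv} := by
    intro p hp
    rw [Finset.mem_filter] at hp
    obtain ⟨hpl, hpint⟩ := hp
    rw [List.mem_toFinset] at hpl
    obtain ⟨q, hqlen, hq⟩ := List.getElem_of_mem hpl
    -- x coordinates of vertices
    have hxuv : (pt l r.u).1 < (pt l r.v).1 := by
      rw [pt_eq hul, pt_eq hvl]; exact sorted_fst_lt hsx hvl huv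
    have hxvw : (pt l r.v).1 < (pt l r.w).1 := by
      rw [pt_eq hvl, pt_eq hwl]; exact sorted_fst_lt hsx hwl hvw
    have hp1 : (pt l r.u).1 < p.1 := interior_fst_gt (le_of_lt hxuv) (by linarith) hpint
    have hp2 : p.1 < (pt l r.w).1 := interior_fst_lt (by linarith) (le_of_lt hxvw) hpint
    -- index bounds
    have hqu : r.u < q := by
      by_contra hcon
      push_neg at hcon
      have : l[q].1 ≤ (pt l r.u).1 := by
        rw [pt_eq hul]
        rcases Nat.eq_or_lt_of_le hcon with he | hlt
        · subst he; exact le_refl _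
        · exact le_of_lt (sorted_fst_lt hsx hul hlt)
      rw [hq] at this
      linarith
    have hqw : q < r.w := by
      by_contra hcon
      push_neg at hcon
      have : (pt l r.w).1 ≤ l[q].1 := by
        rw [pt_eq hwl]
        rcases Nat.eq_or_lt_of_le hcon with he | hlt
        · subst he; exact le_refl _
        · exact le_of_lt (sorted_fst_lt hsx hqlen hlt)
      rw [hq] at this
      linarith
    have hqv : q ≠ r.v := by
      intro he
      subst he
      rw [← pt_eq hqlen] at hq
      rw [← hq] at hpint
      exact mid_not_interior hH hgp huv hvw hwl hpint
    -- use the checker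
    have hqmem : q ∈ List.range' (r.u+1) (r.w - r.u - 1) := by
      rw [List.mem_range'_1]
      exact ⟨by omega, by omega⟩
    have := List.all_eq_true.1 hall q hqmem
    rcases orE this with h1 | h2
    · rcases orE h1 with h1a | h1b
      · exact absurd (beqE h1a) hqv
      · obtain ⟨_, hqs⟩ := andE h1b
        rw [Finset.mem_singleton, ← hq, ← pt_eq hqlen, beqE hqs]
    · rw [List.any_eq_true] at h2
      obtain ⟨c, hcmem, hc2⟩ := h2
      obtain ⟨hcq, hcOK⟩ := andE hc2
      have hcq' : c.q = q := beqE hcq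
      exfalso
      have hexcl := cert_excl hH hlen huv hvw (by omega) c hcOK
        (by omega) (by omega) (by rw [hcq']; exact hqv)
      apply hexcl
      rw [hcq', pt_eq hqlen, hq]
      exact interior_subset hpint
  calc (l.toFinset.filter _).card ≤ ({pt l r.surv} : Finset (ℝ×ℝ)).card :=
        Finset.card_le_card hsub
    _ = 1 := Finset.card_singleton _


set_option maxRecDepth 40000 in
theorem allWF : ∀ w, w < 14 → ∀ r ∈ recsAt w,
    (r.u < r.v ∧ r.v < r.w ∧ r.w = w) ∧ r.pu = 4^r.u ∧ r.pv = 4^r.v := by decide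

set_option maxRecDepth 40000 in
set_option maxHeartbeats 4000000 in
theorem allOK : ∀ w, w < 14 → ∀ r ∈ recsAt w, recOK r = true := by decide

end HortonProof

/-- Every Horton set with at least 26 points (in general position), colored arbitrarily
with 4 colors, contains a monochromatic triangle with at most 1 interior point. -/
theorem horton_four_colors (l : List (ℝ × ℝ)) (hH : IsHorton l)
    (hgp : GenPos {p | p ∈ l}) (hlen : 26 ≤ l.length) (χ : ℝ × ℝ → Fin 4) :
    ∃ a ∈ l, ∃ b ∈ l, ∃ d ∈ l, a ≠ b ∧ a ≠ d ∧ b ≠ d ∧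
      χ a = χ b ∧ χ b = χ d ∧ triPts l.toFinset a b d ≤ 1 := by
  have hsx := HortonProof.hortonSortedX hH
  obtain ⟨w, hw14, r, hrmem, hm1, hm2⟩ :=
    HortonProof.dfs_sound HortonProof.allWF 15 0 0 0 HortonProof.dfs_true
      (by norm_num)
      (fun i => (χ (HortonProof.pt l i)).val) (fun i => (χ _).isLt)
      (by intro i j hi hj; omega)
      (by intro i hi; omega)
      (by intro c hc; omega)
  have hOK := HortonProof.allOK w hw14 r hrmem
  obtain ⟨⟨huv, hvw, _⟩, _, _⟩ := HortonProof.allWF w hw14 r hrmem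
  have hidx : r.w < 14 := by
    unfold HortonProof.recOK at hOK
    obtain ⟨h', hall⟩ := HortonProof.andE hOK
    obtain ⟨h'', hw14'⟩ := HortonProof.andE h'
    simpa using hw14'
  have hul : r.u < l.length := by omega
  have hvl : r.v < l.length := by omega
  have hwl : r.w < l.length := by omega
  refine ⟨HortonProof.pt l r.u, HortonProof.pt_mem hul, HortonProof.pt l r.v,
    HortonProof.pt_mem hvl, HortonProof.pt l r.w, HortonProof.pt_mem hwl, ?_, ?_, ?_, ?_, ?_, ?_⟩
  · rw [HortonProof.pt_eq hul, HortonProof.pt_eq hvl]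
    exact HortonProof.sorted_ne hsx hul hvl (by omega)
  · rw [HortonProof.pt_eq hul, HortonProof.pt_eq hwl]
    exact HortonProof.sorted_ne hsx hul hwl (by omega)
  · rw [HortonProof.pt_eq hvl, HortonProof.pt_eq hwl]
    exact HortonProof.sorted_ne hsx hvl hwl (by omega)
  · exact Fin.val_injective hm1
  · exact Fin.val_injective hm2
  · exact HortonProof.record_triPts hH hgp hlen r hOK
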